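/- arXiv:1611.04014 — 7 statements merged into one kernel-verified Lean document; each statement's English description precedes it below -/
import Mathlib

section
/- For every word u over the positive integers, the reversal of u is Wilf equivalent to u; that is, the weight generating function F(u;t,x) = Σ_{w ≥ u} t^{|w|} x^{‖w‖} (summed over words w into which u embeds under the generalized factor order) equals F(ũ;t,x), where ũ is the reversal of u. -/
abbrev Word := List ℕ+

/-- Height (letter-sum) of a word. -/
def ht (w : Word) : ℕ := (w.map (fun x => (x : ℕ))).sum

/-- Embedding index set of `u` into `w` (1-based positions). -/
def Em (u w : Word) : Set ℕ :=
  {j | 1 ≤ j ∧ j - 1 + u.length ≤ w.length ∧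
    ∀ k, k < u.length → u.getD k 1 ≤ w.getD (j - 1 + k) 1}

/-- Super-strong Wilf equivalence. -/
def SSWilf (u v : Word) : Prop :=
  ∃ f : Word → Word, Function.Bijective f ∧
    (∀ w, (f w).length = w.length ∧ ht (f w) = ht w) ∧
    (∀ w, Em u w = Em v (f w))

/-- `w` is a permutation of `[n]`. -/
def IsPerm (n : ℕ) (w : Word) : Prop :=
  w.length = n ∧ ∀ k : ℕ, 1 ≤ k → k ≤ n → (w.map (fun x => (x : ℕ))).count k = 1

/-- 1-based position of the letter `k` in `u`. -/
def pos (u : Word) (k : ℕ) : ℕ := (u.map (fun x => (x : ℕ))).idxOf k + 1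

/-- `E` is an embedding set satisfying the overlap condition for words of length `n`. -/
def IsEmbSet (n : ℕ) (E : Finset ℕ) : Prop :=
  1 ∈ E ∧ (∀ a ∈ E, 1 ≤ a) ∧
  ∀ a ∈ E, (∀ b ∈ E, b ≤ a) ∨ ∃ b ∈ E, a < b ∧ b ≤ a + (n - 1)

/-- The letter at (1-based) position `p` of the (pre-)cluster of `u` on `E`. -/
def clusterAt (u : Word) (E : Finset ℕ) (p : ℕ) : ℕ+ :=
  (E.sup (fun a => if a ≤ p ∧ p < a + u.length then ((u.getD (p - a) 1 : ℕ+) : ℕ) else 1)).toPNat'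

/-- The minimal cluster of `u` with embedding set `E`. -/
def mcluster (u : Word) (E : Finset ℕ) : Word :=
  (List.range (E.sup id - 1 + u.length)).map (fun j => clusterAt u E (j + 1))

/-- The extended minimal cluster of `u` on `E` with prescribed length `n`. -/
def extCluster (u : Word) (E : Finset ℕ) (n : ℕ) : Word :=
  (List.range n).map (fun j => clusterAt u E (j + 1))

/-- The multiset `i⁺(u)` of distances from the letter `i` to larger letters. -/
def iplus (n : ℕ) (u : Word) (i : ℕ) : Multiset ℕ :=
  (Multiset.Icc (i + 1) n).map (fun j => Nat.dist (pos u i) (pos u j))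

/-- Cross equivalence of permutations of `[n]`. -/
def CrossEq (n : ℕ) (u v : Word) : Prop :=
  ∀ i, 1 ≤ i → i ≤ n - 1 → iplus n u i = iplus n v i

/-- Increasing list of (1-based) positions in `u` of the letters `≥ i`. -/
def posList (u : Word) (i : ℕ) : List ℕ :=
  ((List.range u.length).filter (fun k => i ≤ ((u.getD k 1 : ℕ+) : ℕ))).map (· + 1)

/-- `Δᵢ(u⁻¹)`: consecutive differences of positions of letters `≥ i` in `u`. -/
def Delta (u : Word) (i : ℕ) : List ℕ :=
  List.zipWith (fun a b => b - a) (posList u i) (posList u i).tail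

/-- Shift `(p-1) + E` of an embedding set. -/
def shiftSet (p : ℕ) (E : Finset ℕ) : Finset ℕ := E.image (fun e => p - 1 + e)

lemma ht_reverse (w : Word) : ht w.reverse = ht w := by
  induction w with
  | nil => rfl
  | cons a l ih => simp [ht] at *; omega

lemma em_rev (u w : Word) (j : ℕ) (hj : j ∈ Em u w) :
    (w.length - u.length - (j - 1) + 1) ∈ Em u.reverse w.reverse := by
  obtain ⟨h1, h2, h3⟩ := hj
  refine ⟨Nat.le_add_left _ _, ?_, ?_⟩
  · simp only [Nat.add_sub_cancel, List.length_reverse]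
    omega
  · intro k hk
    simp only [List.length_reverse] at hk
    have hk' : u.length - 1 - k < u.length := by omega
    have hw : w.length - u.length - (j - 1) + 1 - 1 + k < w.length := by omega
    rw [List.getD_eq_getElem _ _ (by simpa using hk),
        List.getD_eq_getElem _ _ (by simpa using hw),
        List.getElem_reverse, List.getElem_reverse,
        ← List.getD_eq_getElem _ 1, ← List.getD_eq_getElem _ 1]
    have heq : w.length - 1 - (w.length - u.length - (j - 1) + 1 - 1 + k)
        = j - 1 + (u.length - 1 - k) := by omega
    rw [heq]
    exact h3 _ hk'

lemma em_nonempty_rev (u w : Word) :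
    (Em u w).Nonempty ↔ (Em u.reverse w.reverse).Nonempty := by
  constructor
  · rintro ⟨j, hj⟩; exact ⟨_, em_rev u w j hj⟩
  · rintro ⟨j, hj⟩
    have := em_rev u.reverse w.reverse j hj
    rw [List.reverse_reverse, List.reverse_reverse] at this
    exact ⟨_, this⟩

/-- `u` is Wilf equivalent to its reversal: the weight generating
functions agree, i.e. they have the same coefficients: for all lengths `n` and
heights `m`, the number of words `w ≥ u` of length `n` and height `m` equals the
number of words `w ≥ ũ` of length `n` and height `m`. -/
theorem reverse_wilf_equivalent (u : Word) (n m : ℕ) :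
    {w : Word | w.length = n ∧ ht w = m ∧ (Em u w).Nonempty}.ncard =
    {w : Word | w.length = n ∧ ht w = m ∧ (Em u.reverse w).Nonempty}.ncard := by
  have himg : {w : Word | w.length = n ∧ ht w = m ∧ (Em u.reverse w).Nonempty}
      = List.reverse '' {w : Word | w.length = n ∧ ht w = m ∧ (Em u w).Nonempty} := by
    ext w
    simp only [Set.mem_image, Set.mem_setOf_eq]
    constructor
    · rintro ⟨hl, hh, he⟩
      refine ⟨w.reverse, ⟨by simpa using hl, by rwa [ht_reverse], ?_⟩, w.reverse_reverse⟩
      rw [em_nonempty_rev, List.reverse_reverse]; exact he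
    · rintro ⟨v, ⟨hl, hh, he⟩, rfl⟩
      refine ⟨by simpa using hl, by rwa [ht_reverse], ?_⟩
      rwa [← em_nonempty_rev]
  rw [himg, Set.ncard_image_of_injective _ List.reverse_injective]
end

section
/- If u and v are words over the positive integers with u super-strongly Wilf equivalent to v, then 1u is super-strongly Wilf equivalent to 1v, 1u is super-strongly Wilf equivalent to v1, and u⁺ is super-strongly Wilf equivalent to v⁺ (where u⁺ increments every letter of u by 1). -/
lemma Em_one_cons (u w : Word) : Em (1 :: u) w = {j | 1 ≤ j ∧ j + 1 ∈ Em u w} := by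
  ext j
  simp only [Em, Set.mem_setOf_eq, List.length_cons]
  constructor
  · rintro ⟨hj, hlen, hval⟩
    refine ⟨hj, le_refl _ |>.trans (by omega), by omega, fun k hk => ?_⟩
    have := hval (k + 1) (by omega)
    have e : j - 1 + (k + 1) = j + 1 - 1 + k := by omega
    rw [e] at this
    simpa using this
  · rintro ⟨hj, -, hlen, hval⟩
    refine ⟨hj, by omega, fun k hk => ?_⟩
    match k with
    | 0 =>
      simp only [List.getD_cons_zero]
      exact (w.getD (j - 1 + 0) 1).one_le
    | k + 1 =>
      have := hval k (by omega)
      have e : j + 1 - 1 + k = j - 1 + (k + 1) := by omega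
      rw [e] at this
      simpa using this

lemma Em_append_one_rotate (v x : Word) :
    Em (v ++ [1]) (x.rotate 1) = {j | 1 ≤ j ∧ j + 1 ∈ Em v x} := by
  ext j
  match x with
  | [] =>
    simp only [Em, Set.mem_setOf_eq, List.rotate_nil, List.length_nil, List.length_append,
      List.length_cons]
    constructor
    · rintro ⟨hj, hlen, -⟩; omega
    · rintro ⟨hj, h2⟩
      exact absurd h2.2.1 (by omega)
  | c :: x' =>
    rw [show (c :: x').rotate 1 = x' ++ [c] from List.rotate_cons_succ x' c 0 |>.trans (List.rotate_zero _)]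
    simp only [Em, Set.mem_setOf_eq, List.length_append, List.length_cons, List.length_singleton,
      List.length_nil]
    constructor
    · rintro ⟨hj, hlen, hval⟩
      refine ⟨hj, by omega, by omega, fun k hk => ?_⟩
      have := hval k (by omega)
      rw [List.getD_append _ _ _ _ (by omega)] at this
      rw [List.getD_append _ _ _ _ (by omega : j - 1 + k < x'.length)] at this
      have e : j + 1 - 1 + k = (j - 1 + k) + 1 := by omega
      rw [e, List.getD_cons_succ]
      exact this
    · rintro ⟨hj, -, hlen, hval⟩
      refine ⟨hj, by omega, fun k hk => ?_⟩
      rcases lt_or_eq_of_le (by omega : k ≤ v.length) with hk' | hk'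
      · have := hval k hk'
        rw [List.getD_append _ _ _ _ (by omega), List.getD_append _ _ _ _ (by omega : j - 1 + k < x'.length)]
        have e : j + 1 - 1 + k = (j - 1 + k) + 1 := by omega
        rw [e, List.getD_cons_succ] at this
        exact this
      · subst hk'
        rw [List.getD_append_right _ _ _ _ (le_refl _)]
        simp only [Nat.sub_self, List.getD_cons_zero]
        exact (List.getD (x' ++ [c]) (j - 1 + v.length) 1).one_le

lemma rotate_one_bijective : Function.Bijective (fun w : Word => w.rotate 1) := by
  rw [Function.bijective_iff_has_inverse]
  refine ⟨fun w => w.rotate (w.length - 1), fun w => ?_, fun w => ?_⟩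
  · simp only [List.length_rotate, List.rotate_rotate]
    match w with
    | [] => simp
    | a :: t =>
      rw [show 1 + ((a :: t).length - 1) = (a :: t).length by simp; omega, List.rotate_length]
  · simp only [List.rotate_rotate]
    match w with
    | [] => simp
    | a :: t =>
      rw [show (a :: t).length - 1 + 1 = (a :: t).length by simp, List.rotate_length]

lemma ht_cons (a : ℕ+) (w : Word) : ht (a :: w) = (a : ℕ) + ht w := by simp [ht]

lemma ht_append (w₁ w₂ : Word) : ht (w₁ ++ w₂) = ht w₁ + ht w₂ := by simp [ht]

lemma ht_perm {w₁ w₂ : Word} (p : w₁.Perm w₂) : ht w₁ = ht w₂ := by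
  induction p with
  | nil => rfl
  | cons x _ ih => simp [ht_cons, ih]
  | swap x y l => simp [ht_cons]; omega
  | trans _ _ ih1 ih2 => exact ih1.trans ih2

lemma ht_rotate (w : Word) (n : ℕ) : ht (w.rotate n) = ht w :=
  ht_perm (List.rotate_perm w n)

theorem part1 (u v : Word) (h : SSWilf u v) : SSWilf (1 :: u) (1 :: v) := by
  obtain ⟨f, hbij, hpres, hEm⟩ := h
  exact ⟨f, hbij, hpres, fun w => by rw [Em_one_cons, Em_one_cons, hEm w]⟩

theorem part2 (u v : Word) (h : SSWilf u v) : SSWilf (1 :: u) (v ++ [1]) := by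
  obtain ⟨f, hbij, hpres, hEm⟩ := h
  refine ⟨fun w => (f w).rotate 1, rotate_one_bijective.comp hbij, fun w => ?_, fun w => ?_⟩
  · simp only [List.length_rotate, ht_rotate]
    exact hpres w
  · rw [Em_one_cons, Em_append_one_rotate, hEm w]

lemma pnat_dec_inc (x : ℕ+) : (x + 1) - 1 = x := by
  apply PNat.coe_injective
  have hx := x.pos
  rw [PNat.sub_coe, if_pos]
  · push_cast; omega
  · rw [← PNat.coe_lt_coe]; push_cast; omega

lemma pnat_inc_dec (x : ℕ+) (hx : x ≠ 1) : (x - 1) + 1 = x := by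
  have h1 : (1 : ℕ+) < x := lt_of_le_of_ne x.one_le (Ne.symm hx)
  apply PNat.coe_injective
  rw [PNat.add_coe, PNat.sub_coe, if_pos h1]
  have h1' : (1 : ℕ) < (x : ℕ) := by exact_mod_cast h1
  push_cast; omega

lemma map_dec_inc (A : Word) (hA : ∀ x ∈ A, x ≠ 1) :
    (A.map (· - 1)).map (· + 1) = A := by
  rw [List.map_map]
  conv_rhs => rw [← List.map_id A]
  exact List.map_congr_left (fun a ha => pnat_inc_dec a (hA a ha))

lemma map_inc_dec (A : Word) : (A.map (· + 1)).map (· - 1) = A := by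
  rw [List.map_map]
  conv_rhs => rw [← List.map_id A]
  exact List.map_congr_left (fun a _ => pnat_dec_inc a)

lemma map_inc_ne_one (A : Word) : ∀ x ∈ A.map (· + 1), x ≠ 1 := by
  intro x hx
  simp only [List.mem_map] at hx
  obtain ⟨a, -, rfl⟩ := hx
  intro hcon
  have h1 : ((a + 1 : ℕ+) : ℕ) = ((1 : ℕ+) : ℕ) := congrArg _ hcon
  have h2 := a.pos
  rw [PNat.add_coe, PNat.one_coe] at h1
  omega

lemma pnat_two_not_le_one (a : ℕ+) : ¬ (a + 1 ≤ (1 : ℕ+)) := by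
  intro hcon
  have h1 : ((a + 1 : ℕ+) : ℕ) ≤ 1 := by exact_mod_cast hcon
  have h2 := a.pos
  rw [PNat.add_coe, PNat.one_coe] at h1
  omega

lemma Em_map_inc (u x : Word) : Em (u.map (· + 1)) (x.map (· + 1)) = Em u x := by
  ext j
  simp only [Em, Set.mem_setOf_eq, List.length_map]
  constructor
  · rintro ⟨h1, h2, h3⟩
    refine ⟨h1, h2, fun k hk => ?_⟩
    have hk2 : j - 1 + k < x.length := by omega
    have hh := h3 k hk
    rw [List.getD_eq_getElem _ _ (by simpa using hk),
      List.getD_eq_getElem _ _ (by simpa using hk2)] at hh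
    simp only [List.getElem_map] at hh
    rw [List.getD_eq_getElem _ _ hk, List.getD_eq_getElem _ _ hk2]
    have hh' : ((u[k] : ℕ) + 1) ≤ ((x[j - 1 + k] : ℕ) + 1) := by exact_mod_cast hh
    rw [← PNat.coe_le_coe]; omega
  · rintro ⟨h1, h2, h3⟩
    refine ⟨h1, h2, fun k hk => ?_⟩
    have hk2 : j - 1 + k < x.length := by omega
    have hh := h3 k hk
    rw [List.getD_eq_getElem _ _ hk, List.getD_eq_getElem _ _ hk2] at hh
    rw [List.getD_eq_getElem _ _ (by simpa using hk),
      List.getD_eq_getElem _ _ (by simpa using hk2)]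
    simp only [List.getElem_map]
    have hh' : ((u[k] : ℕ)) ≤ ((x[j - 1 + k] : ℕ)) := by exact_mod_cast hh
    rw [← PNat.coe_le_coe]
    push_cast
    omega

lemma Em_split (u a b : Word) :
    Em (u.map (· + 1)) (a ++ 1 :: b) =
      Em (u.map (· + 1)) a ∪ (fun j => j + (a.length + 1)) '' Em (u.map (· + 1)) b := by
  ext j
  simp only [Em, Set.mem_setOf_eq, List.length_map, List.length_append, List.length_cons,
    Set.mem_union, Set.mem_image]
  constructor
  · rintro ⟨h1, h2, h3⟩
    by_cases hc : j - 1 + u.length ≤ a.length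
    · left
      refine ⟨h1, hc, fun k hk => ?_⟩
      have hh := h3 k hk
      rwa [List.getD_append _ _ _ _ (by omega)] at hh
    · by_cases hc2 : j - 1 ≤ a.length
      · exfalso
        have hk : a.length - (j - 1) < u.length := by omega
        have hh := h3 _ hk
        rw [show j - 1 + (a.length - (j - 1)) = a.length by omega,
          List.getD_append_right _ _ _ _ (le_refl _), Nat.sub_self, List.getD_cons_zero] at hh
        rw [List.getD_eq_getElem _ _ (by simpa using hk)] at hh
        simp only [List.getElem_map] at hh
        exact pnat_two_not_le_one _ hh
      · right
        refine ⟨j - (a.length + 1), ⟨by omega, by omega, fun k hk => ?_⟩, by omega⟩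
        have hh := h3 k hk
        rw [List.getD_append_right _ _ _ _ (by omega),
          show j - 1 + k - a.length = (j - (a.length + 1) - 1 + k) + 1 by omega,
          List.getD_cons_succ] at hh
        exact hh
  · rintro (⟨h1, h2, h3⟩ | ⟨j', ⟨h1, h2, h3⟩, rfl⟩)
    · refine ⟨h1, by omega, fun k hk => ?_⟩
      rw [List.getD_append _ _ _ _ (by omega)]
      exact h3 k hk
    · refine ⟨by omega, by omega, fun k hk => ?_⟩
      rw [List.getD_append_right _ _ _ _ (by omega),
        show j' + (a.length + 1) - 1 + k - a.length = (j' - 1 + k) + 1 by omega,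
        List.getD_cons_succ]
      exact h3 k hk

/-- The block transform: apply `f` to the decremented leading 1-free block and re-increment. -/
def Gblk (f : Word → Word) (w : Word) : Word :=
  (f ((w.takeWhile (fun x : ℕ+ => decide (x ≠ 1))).map (· - 1))).map (· + 1)

/-- The bijection for `u⁺ ∼ v⁺` built from `f`. -/
def G (f : Word → Word) (w : Word) : Word :=
  if h : w.dropWhile (fun x : ℕ+ => decide (x ≠ 1)) = [] then Gblk f w
  else Gblk f w ++ 1 :: G f ((w.dropWhile (fun x : ℕ+ => decide (x ≠ 1))).tail)
termination_by w.length
decreasing_by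
  have h1 : (w.dropWhile (fun x : ℕ+ => decide (x ≠ 1))).length ≤ w.length :=
    (List.dropWhile_sublist _).length_le
  have h2 : 0 < (w.dropWhile (fun x : ℕ+ => decide (x ≠ 1))).length := List.length_pos_iff.mpr h
  simp only [List.length_tail]
  omega

lemma takeWhile_mem_ne_one (w : Word) :
    ∀ x ∈ w.takeWhile (fun x : ℕ+ => decide (x ≠ 1)), x ≠ 1 := fun x hx =>
  of_decide_eq_true (List.mem_takeWhile_imp (p := fun x : ℕ+ => decide (x ≠ 1)) hx)

lemma block_split (A : Word) (hA : ∀ x ∈ A, x ≠ 1) (t : Word) :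
    (A ++ 1 :: t).takeWhile (fun x : ℕ+ => decide (x ≠ 1)) = A ∧
      (A ++ 1 :: t).dropWhile (fun x : ℕ+ => decide (x ≠ 1)) = 1 :: t := by
  induction A with
  | nil =>
    constructor
    · exact List.takeWhile_cons_of_neg (p := fun x : ℕ+ => decide (x ≠ 1)) (by simp)
    · exact List.dropWhile_cons_of_neg (p := fun x : ℕ+ => decide (x ≠ 1)) (by simp)
  | cons a A ih =>
    have ha : decide (a ≠ (1 : ℕ+)) = true := by simp [hA a (by simp)]
    obtain ⟨ih1, ih2⟩ := ih (fun x hx => hA x (by simp [hx]))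
    constructor
    · rw [List.cons_append, List.takeWhile_cons_of_pos (p := fun x : ℕ+ => decide (x ≠ 1)) ha, ih1]
    · rw [List.cons_append, List.dropWhile_cons_of_pos (p := fun x : ℕ+ => decide (x ≠ 1)) ha, ih2]

lemma block_all (A : Word) (hA : ∀ x ∈ A, x ≠ 1) :
    A.takeWhile (fun x : ℕ+ => decide (x ≠ 1)) = A ∧
      A.dropWhile (fun x : ℕ+ => decide (x ≠ 1)) = [] := by
  induction A with
  | nil => simp
  | cons a A ih =>
    have ha : decide (a ≠ (1 : ℕ+)) = true := by simp [hA a (by simp)]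
    obtain ⟨ih1, ih2⟩ := ih (fun x hx => hA x (by simp [hx]))
    exact ⟨by rw [List.takeWhile_cons_of_pos (p := fun x : ℕ+ => decide (x ≠ 1)) ha, ih1],
      by rw [List.dropWhile_cons_of_pos (p := fun x : ℕ+ => decide (x ≠ 1)) ha, ih2]⟩

lemma G_decomp (f : Word → Word) (w : Word)
    (h : w.dropWhile (fun x : ℕ+ => decide (x ≠ 1)) ≠ []) :
    ∃ t : Word, w = w.takeWhile (fun x : ℕ+ => decide (x ≠ 1)) ++ 1 :: t ∧
      G f w = Gblk f w ++ 1 :: G f t ∧ t.length + 1 ≤ w.length := by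
  set p := fun x : ℕ+ => decide (x ≠ 1) with hp
  refine ⟨(w.dropWhile p).tail, ?_, ?_, ?_⟩
  · conv_lhs => rw [← List.takeWhile_append_dropWhile (p := p) (l := w)]
    congr 1
    have hhead := List.head_dropWhile_not p (l := w) h
    have h1 : (w.dropWhile p).head h = 1 := by simpa [hp] using hhead
    conv_lhs => rw [← List.cons_head_tail h, h1]
  · rw [G, dif_neg h]
  · have h1 : (w.dropWhile p).length ≤ w.length := (List.dropWhile_sublist _).length_le
    have h2 : 0 < (w.dropWhile p).length := List.length_pos_iff.mpr h
    simp only [List.length_tail]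
    omega

lemma G_eq_pos (f : Word → Word) (w : Word)
    (h : w.dropWhile (fun x : ℕ+ => decide (x ≠ 1)) = []) : G f w = Gblk f w := by
  rw [G, dif_pos h]

lemma takeWhile_eq_self_of (w : Word)
    (h : w.dropWhile (fun x : ℕ+ => decide (x ≠ 1)) = []) :
    w.takeWhile (fun x : ℕ+ => decide (x ≠ 1)) = w := by
  have h2 := List.takeWhile_append_dropWhile (p := fun x : ℕ+ => decide (x ≠ 1)) (l := w)
  rwa [h, List.append_nil] at h2

lemma ht_map_inc (l : Word) : ht (l.map (· + 1)) = ht l + l.length := by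
  induction l with
  | nil => rfl
  | cons a l ih =>
    simp only [List.map_cons, ht_cons, ih, PNat.add_coe, PNat.one_coe, List.length_cons]
    omega

lemma Gblk_length (f : Word → Word) (hf : ∀ x, (f x).length = x.length) (w : Word) :
    (Gblk f w).length = (w.takeWhile (fun x : ℕ+ => decide (x ≠ 1))).length := by
  simp [Gblk, hf]

lemma Gblk_ht (f : Word → Word) (hfl : ∀ x, (f x).length = x.length)
    (hfh : ∀ x, ht (f x) = ht x) (w : Word) :
    ht (Gblk f w) = ht (w.takeWhile (fun x : ℕ+ => decide (x ≠ 1))) := by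
  rw [Gblk, ht_map_inc, hfh, hfl]
  conv_rhs => rw [← map_dec_inc _ (takeWhile_mem_ne_one w), ht_map_inc]

lemma Gblk_Em (u v : Word) (f : Word → Word) (hEm : ∀ w, Em u w = Em v (f w)) (w : Word) :
    Em (u.map (· + 1)) (w.takeWhile (fun x : ℕ+ => decide (x ≠ 1))) =
      Em (v.map (· + 1)) (Gblk f w) := by
  conv_lhs => rw [← map_dec_inc _ (takeWhile_mem_ne_one w)]
  rw [Em_map_inc, hEm, Gblk, Em_map_inc]

lemma G_length_aux (f : Word → Word) (hf : ∀ x, (f x).length = x.length) :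
    ∀ (n : ℕ) (w : Word), w.length ≤ n → (G f w).length = w.length := by
  intro n
  induction n with
  | zero =>
    intro w hw
    have hnil : w = [] := List.eq_nil_of_length_eq_zero (Nat.le_zero.mp hw)
    subst hnil
    rw [G_eq_pos f [] rfl, Gblk_length f hf]
    rfl
  | succ n ihn =>
    intro w hw
    by_cases h : w.dropWhile (fun x : ℕ+ => decide (x ≠ 1)) = []
    · rw [G_eq_pos f w h, Gblk_length f hf, takeWhile_eq_self_of w h]
    · obtain ⟨t, hw_eq, hG, hlen⟩ := G_decomp f w h
      rw [hG]
      simp only [List.length_append, List.length_cons]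
      rw [Gblk_length f hf, ihn t (by omega)]
      conv_rhs => rw [hw_eq]
      simp

lemma G_ht_aux (f : Word → Word) (hfl : ∀ x, (f x).length = x.length)
    (hfh : ∀ x, ht (f x) = ht x) :
    ∀ (n : ℕ) (w : Word), w.length ≤ n → ht (G f w) = ht w := by
  intro n
  induction n with
  | zero =>
    intro w hw
    have hnil : w = [] := List.eq_nil_of_length_eq_zero (Nat.le_zero.mp hw)
    subst hnil
    rw [G_eq_pos f [] rfl, Gblk_ht f hfl hfh]
    rfl
  | succ n ihn =>
    intro w hw
    by_cases h : w.dropWhile (fun x : ℕ+ => decide (x ≠ 1)) = []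
    · rw [G_eq_pos f w h, Gblk_ht f hfl hfh, takeWhile_eq_self_of w h]
    · obtain ⟨t, hw_eq, hG, hlen⟩ := G_decomp f w h
      rw [hG, ht_append, ht_cons, Gblk_ht f hfl hfh, ihn t (by omega)]
      conv_rhs => rw [hw_eq]
      rw [ht_append, ht_cons]

lemma G_Em_aux (u v : Word) (f : Word → Word) (hfl : ∀ x, (f x).length = x.length)
    (hEm : ∀ w, Em u w = Em v (f w)) :
    ∀ (n : ℕ) (w : Word), w.length ≤ n →
      Em (u.map (· + 1)) w = Em (v.map (· + 1)) (G f w) := by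
  intro n
  induction n with
  | zero =>
    intro w hw
    have hnil : w = [] := List.eq_nil_of_length_eq_zero (Nat.le_zero.mp hw)
    subst hnil
    rw [G_eq_pos f [] rfl]
    have h0 := Gblk_Em u v f hEm []
    simpa using h0
  | succ n ihn =>
    intro w hw
    by_cases h : w.dropWhile (fun x : ℕ+ => decide (x ≠ 1)) = []
    · rw [G_eq_pos f w h]
      conv_lhs => rw [← takeWhile_eq_self_of w h]
      exact Gblk_Em u v f hEm w
    · obtain ⟨t, hw_eq, hG, hlen⟩ := G_decomp f w h
      conv_lhs => rw [hw_eq]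
      rw [Em_split, hG, Em_split, Gblk_length f hfl, Gblk_Em u v f hEm w, ihn t (by omega)]

lemma G_inv_pos (f₁ f₂ : Word → Word) (hcomp : ∀ x, f₂ (f₁ x) = x) (w : Word)
    (h : w.dropWhile (fun x : ℕ+ => decide (x ≠ 1)) = []) : G f₂ (G f₁ w) = w := by
  have hA : ∀ x ∈ w, x ≠ 1 := fun x hx =>
    takeWhile_mem_ne_one w x (by rw [takeWhile_eq_self_of w h]; exact hx)
  have e1 : G f₁ w = (f₁ (w.map (· - 1))).map (· + 1) := by
    rw [G_eq_pos f₁ w h, Gblk, takeWhile_eq_self_of w h]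
  have hB := map_inc_ne_one (f₁ (w.map (· - 1)))
  rw [e1, G_eq_pos f₂ _ (block_all _ hB).2, Gblk, (block_all _ hB).1, map_inc_dec, hcomp,
    map_dec_inc w hA]

lemma G_inv_aux (f₁ f₂ : Word → Word) (hcomp : ∀ x, f₂ (f₁ x) = x) :
    ∀ (n : ℕ) (w : Word), w.length ≤ n → G f₂ (G f₁ w) = w := by
  intro n
  induction n with
  | zero =>
    intro w hw
    have hnil : w = [] := List.eq_nil_of_length_eq_zero (Nat.le_zero.mp hw)
    subst hnil
    exact G_inv_pos f₁ f₂ hcomp [] rfl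
  | succ n ihn =>
    intro w hw
    by_cases h : w.dropWhile (fun x : ℕ+ => decide (x ≠ 1)) = []
    · exact G_inv_pos f₁ f₂ hcomp w h
    · obtain ⟨t, hw_eq, hG, hlen⟩ := G_decomp f₁ w h
      have hB := map_inc_ne_one (f₁ ((w.takeWhile (fun x : ℕ+ => decide (x ≠ 1))).map (· - 1)))
      have hsplit := block_split _ hB (G f₁ t)
      have hGblk : Gblk f₁ w =
          (f₁ ((w.takeWhile (fun x : ℕ+ => decide (x ≠ 1))).map (· - 1))).map (· + 1) := rfl
      rw [hG, hGblk, G, dif_neg (by rw [hsplit.2]; simp), hsplit.2, List.tail_cons]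
      simp only [Gblk]
      rw [hsplit.1, map_inc_dec, hcomp, map_dec_inc _ (takeWhile_mem_ne_one w), ihn t (by omega)]
      exact hw_eq.symm

theorem part3 (u v : Word) (h : SSWilf u v) :
    SSWilf (u.map (· + 1)) (v.map (· + 1)) := by
  obtain ⟨f, hbij, hpres, hEm⟩ := h
  have hfl : ∀ x, (f x).length = x.length := fun x => (hpres x).1
  have hfh : ∀ x, ht (f x) = ht x := fun x => (hpres x).2
  let e := Equiv.ofBijective f hbij
  have hcomp1 : ∀ x, e.symm (f x) = x := fun x => e.symm_apply_apply x
  have hcomp2 : ∀ x, f (e.symm x) = x := fun x => e.apply_symm_apply x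
  refine ⟨G f, ?_, fun w => ⟨G_length_aux f hfl w.length w le_rfl,
    G_ht_aux f hfl hfh w.length w le_rfl⟩, fun w => G_Em_aux u v f hfl hEm w.length w le_rfl⟩
  rw [Function.bijective_iff_has_inverse]
  exact ⟨G (fun x => e.symm x),
    fun w => G_inv_aux f (fun x => e.symm x) hcomp1 w.length w le_rfl,
    fun w => G_inv_aux (fun x => e.symm x) f hcomp2 w.length w le_rfl⟩

/-- if `u ∼ₛₛ v` then `1u ∼ₛₛ 1v`, `1u ∼ₛₛ v1` and `u⁺ ∼ₛₛ v⁺`. -/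
theorem sswilf_cons_append_plus (u v : Word) (h : SSWilf u v) :
    SSWilf (1 :: u) (1 :: v) ∧ SSWilf (1 :: u) (v ++ [1]) ∧
      SSWilf (u.map (· + 1)) (v.map (· + 1)) := by
  exact ⟨part1 u v h, part2 u v h, part3 u v h⟩
end

section
/- Let u, v be permutations of [n] and E an embedding index set satisfying the overlap condition. If the minimal clusters m(u,E) and m(v,E) have different letter-sums (heights), then u is not super-strongly Wilf equivalent to v. -/
lemma ht_eq_sum (l : Word) : ht l = ∑ j ∈ Finset.range l.length, ((l.getD j 1 : ℕ+) : ℕ) := by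
  induction l with
  | nil => simp [ht]
  | cons a t ih =>
    have hc : ht (a :: t) = (a : ℕ) + ht t := by simp [ht]
    rw [hc, List.length_cons, Finset.sum_range_succ']
    simp only [List.getD_cons_succ, List.getD_cons_zero]
    rw [ih]; ring

lemma clusterAt_coe (u : Word) (E : Finset ℕ) (hE : E.Nonempty) (p : ℕ) :
    ((clusterAt u E p : ℕ+) : ℕ)
      = E.sup (fun a => if a ≤ p ∧ p < a + u.length then ((u.getD (p - a) 1 : ℕ+) : ℕ) else 1) := by
  obtain ⟨a, ha⟩ := hE
  have h1 : 1 ≤ E.sup (fun a => if a ≤ p ∧ p < a + u.length then ((u.getD (p - a) 1 : ℕ+) : ℕ) else 1) := by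
    refine le_trans ?_ (Finset.le_sup ha)
    split
    · exact (u.getD (p - a) 1).pos
    · exact le_refl 1
  exact PNat.toPNat'_coe h1

lemma length_mcluster (u : Word) (E : Finset ℕ) :
    (mcluster u E).length = E.sup id - 1 + u.length := by
  simp [mcluster]

lemma getD_mcluster (u : Word) (E : Finset ℕ) {i : ℕ} (hi : i < E.sup id - 1 + u.length) :
    (mcluster u E).getD i 1 = clusterAt u E (i + 1) := by
  have h : i < (mcluster u E).length := by rwa [length_mcluster]
  rw [List.getD_eq_getElem _ _ h]
  simp [mcluster]

lemma subset_Em_mcluster (u : Word) (E : Finset ℕ) (hE2 : ∀ a ∈ E, 1 ≤ a) :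
    ∀ a ∈ E, a ∈ Em u (mcluster u E) := by
  intro a ha
  have hsup : a ≤ E.sup id := Finset.le_sup (f := id) ha
  have ha1 : 1 ≤ a := hE2 a ha
  refine ⟨ha1, ?_, ?_⟩
  · rw [length_mcluster]; omega
  · intro k hk
    have hidx : a - 1 + k < E.sup id - 1 + u.length := by omega
    rw [getD_mcluster u E hidx]
    have hp : a - 1 + k + 1 = a + k := by omega
    rw [hp]
    have hne : E.Nonempty := ⟨a, ha⟩
    rw [← PNat.coe_le_coe, clusterAt_coe u E hne]
    have hcond : a ≤ a + k ∧ a + k < a + u.length := ⟨Nat.le_add_right a k, by omega⟩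
    have := Finset.le_sup (f := fun b => if b ≤ a + k ∧ a + k < b + u.length
        then ((u.getD (a + k - b) 1 : ℕ+) : ℕ) else 1) ha
    simpa [hcond, Nat.add_sub_cancel_left] using this

lemma ht_mcluster_le (u : Word) (E : Finset ℕ) (hne : E.Nonempty) (w : Word)
    (hsub : ∀ a ∈ E, a ∈ Em u w) : ht (mcluster u E) ≤ ht w := by
  set L := E.sup id - 1 + u.length with hL
  obtain ⟨b, hb, hbsup⟩ := Finset.exists_mem_eq_sup E hne id
  have hLw : L ≤ w.length := by
    have := (hsub b hb).2.1
    simp only [id] at hbsup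
    omega
  have hpt : ∀ j < L, ((mcluster u E).getD j 1 : ℕ) ≤ ((w.getD j 1 : ℕ+) : ℕ) := by
    intro j hj
    rw [getD_mcluster u E hj, clusterAt_coe u E hne]
    apply Finset.sup_le
    intro a ha
    split
    · next hc =>
      obtain ⟨hc1, hc2⟩ := hc
      have ha1 : 1 ≤ a := (hsub a ha).1
      have hk : j + 1 - a < u.length := by omega
      have := (hsub a ha).2.2 (j + 1 - a) hk
      have heq : a - 1 + (j + 1 - a) = j := by omega
      rw [heq] at this
      exact (PNat.coe_le_coe _ _).mpr this
    · exact (w.getD j 1).pos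
  calc ht (mcluster u E) = ∑ j ∈ Finset.range L, (((mcluster u E).getD j 1 : ℕ+) : ℕ) := by
        rw [ht_eq_sum, length_mcluster]
    _ ≤ ∑ j ∈ Finset.range L, ((w.getD j 1 : ℕ+) : ℕ) := by
        apply Finset.sum_le_sum
        intro j hj
        exact hpt j (Finset.mem_range.mp hj)
    _ ≤ ∑ j ∈ Finset.range w.length, ((w.getD j 1 : ℕ+) : ℕ) := by
        apply Finset.sum_le_sum_of_subset
        exact Finset.range_subset_range.mpr hLw
    _ = ht w := (ht_eq_sum w).symm


/-- if the minimal clusters of two permutations of `[n]` on some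
embedding set have different heights, the permutations are not super-strongly
Wilf equivalent. -/
theorem not_sswilf_of_mcluster_height_ne (n : ℕ) (u v : Word)
    (hu : IsPerm n u) (hv : IsPerm n v) (E : Finset ℕ) (hE : IsEmbSet n E)
    (h : ht (mcluster u E) ≠ ht (mcluster v E)) : ¬ SSWilf u v := by
  rintro ⟨f, hbij, hpres, hEm⟩
  have hE1 : (1 : ℕ) ∈ E := hE.1
  have hE2 : ∀ a ∈ E, 1 ≤ a := hE.2.1
  have hne : E.Nonempty := ⟨1, hE1⟩
  apply h
  apply le_antisymm
  · obtain ⟨w', hw'⟩ := hbij.2 (mcluster v E)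
    have hsub : ∀ a ∈ E, a ∈ Em u w' := by
      intro a ha
      have := subset_Em_mcluster v E hE2 a ha
      rw [← hw', ← hEm w'] at this
      exact this
    calc ht (mcluster u E) ≤ ht w' := ht_mcluster_le u E hne w' hsub
      _ = ht (f w') := ((hpres w').2).symm
      _ = ht (mcluster v E) := by rw [hw']
  · have hsub : ∀ a ∈ E, a ∈ Em v (f (mcluster u E)) := by
      intro a ha
      have := subset_Em_mcluster u E hE2 a ha
      rwa [hEm (mcluster u E)] at this
    calc ht (mcluster v E) ≤ ht (f (mcluster u E)) := ht_mcluster_le v E hne _ hsub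
      _ = ht (mcluster u E) := (hpres _).2
end

section
/- Let u, v be permutations of [n] with inverses s = u⁻¹ and t = v⁻¹. Then u is super-strongly Wilf equivalent to v if and only if for every i ∈ [n−1] and every embedding set E, the cardinality of s̄ᵢ ∩ (⋃_{j=i+1}^{n} s̄ⱼ) equals the cardinality of t̄ᵢ ∩ (⋃_{j=i+1}^{n} t̄ⱼ), where for a position p, p̄ denotes (p−1) + E = {p−1+e : e ∈ E}. -/
namespace SSW


/-- translate of a finite set -/
def tr (P : Finset ℕ) (f : ℕ) : Finset ℕ := P.image (· + f)

/-- union of translates -/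
def US (P F : Finset ℕ) : Finset ℕ := F.biUnion (tr P)

/-- intersection of translates (empty if F empty) -/
def TS (P G : Finset ℕ) : Finset ℕ := (US P G).filter (fun x => ∀ g ∈ G, x ∈ tr P g)

lemma mem_tr {P : Finset ℕ} {f x : ℕ} : x ∈ tr P f ↔ ∃ p ∈ P, p + f = x := by
  simp [tr]

lemma card_tr (P : Finset ℕ) (f : ℕ) : (tr P f).card = P.card :=
  Finset.card_image_of_injective _ (add_left_injective f)

lemma mem_US {P F : Finset ℕ} {x : ℕ} : x ∈ US P F ↔ ∃ f ∈ F, x ∈ tr P f := by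
  simp [US]

lemma US_empty (P : Finset ℕ) : US P ∅ = ∅ := rfl

lemma TS_empty (P : Finset ℕ) : TS P ∅ = ∅ := by simp [TS, US_empty]

lemma mem_TS {P G : Finset ℕ} (hG : G.Nonempty) {x : ℕ} :
    x ∈ TS P G ↔ ∀ g ∈ G, x ∈ tr P g := by
  constructor
  · intro h; exact (Finset.mem_filter.1 h).2
  · intro h
    exact Finset.mem_filter.2 ⟨mem_US.2 ⟨hG.choose, hG.choose_spec, h _ hG.choose_spec⟩, h⟩

lemma TS_singleton (P : Finset ℕ) (g : ℕ) : TS P {g} = tr P g := by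
  ext x; rw [mem_TS (Finset.singleton_nonempty g)]; simp

lemma TS_insert {P G : Finset ℕ} (hG : G.Nonempty) (b : ℕ) :
    TS P (insert b G) = TS P G ∩ tr P b := by
  ext x
  rw [mem_TS (hG.mono (Finset.subset_insert b G) : (insert b G).Nonempty), Finset.mem_inter, mem_TS hG]
  simp only [Finset.mem_insert]
  constructor
  · intro h; exact ⟨fun g hg => h g (Or.inr hg), h b (Or.inl rfl)⟩
  · rintro ⟨h1, h2⟩ g (rfl | hg); exacts [h2, h1 g hg]

lemma US_insert (P : Finset ℕ) (b : ℕ) (F : Finset ℕ) :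
    US P (insert b F) = tr P b ∪ US P F := by
  simp [US, Finset.biUnion_insert]

/-- key cardinal identity |(A∩B)∪C| + |A∪B∪C| = |A∪C| + |B∪C| -/
lemma key_card (A B C : Finset ℕ) :
    ((A ∩ B) ∪ C).card + (A ∪ B ∪ C).card = (A ∪ C).card + (B ∪ C).card := by
  have h1 : (A ∪ C) ∪ (B ∪ C) = A ∪ B ∪ C := by
    ext x; simp [Finset.mem_union]; tauto
  have h2 : (A ∪ C) ∩ (B ∪ C) = (A ∩ B) ∪ C := by
    ext x; simp [Finset.mem_union, Finset.mem_inter]; tauto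
  have := Finset.card_union_add_card_inter (A ∪ C) (B ∪ C)
  rw [h1, h2] at this
  omega

/-- correlation count -/
def cor (P G : Finset ℕ) : ℕ := (TS P G).card

/-- Claim B, family version, bounded: from equality of union-cards (for subsets of range N)
    we get equality of the mixed quantities, summed over an index set. -/
lemma claimB {ι : Type*} (s : Finset ι) (N : ℕ) (P Q : ι → Finset ℕ)
    (hU : ∀ F : Finset ℕ, F.Nonempty → F ⊆ Finset.range N →
      (∑ i ∈ s, (US (P i) F).card) = ∑ i ∈ s, (US (Q i) F).card) :
    ∀ m (G F : Finset ℕ), G.card ≤ m → G.Nonempty → G ⊆ Finset.range N → F ⊆ Finset.range N →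
      (∑ i ∈ s, (TS (P i) G ∪ US (P i) F).card) = ∑ i ∈ s, (TS (Q i) G ∪ US (Q i) F).card := by
  intro m
  induction m with
  | zero => intro G F hc hne _ _; exact absurd (Finset.card_pos.2 hne) (by omega)
  | succ m ih =>
    intro G F hc hne hGN hFN
    rcases eq_or_lt_of_le (show 1 ≤ G.card from Finset.card_pos.2 hne) with h1 | h2
    · -- G is a singleton
      obtain ⟨g, rfl⟩ := Finset.card_eq_one.1 h1.symm
      have hg : g ∈ Finset.range N := hGN (Finset.mem_singleton_self g)
      have e : ∀ R : ι → Finset ℕ, ∀ i : ι, TS (R i) {g} ∪ US (R i) F = US (R i) (insert g F) := by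
        intro R i; rw [TS_singleton, US_insert]
      calc ∑ i ∈ s, (TS (P i) {g} ∪ US (P i) F).card
          = ∑ i ∈ s, (US (P i) (insert g F)).card := by
            refine Finset.sum_congr rfl fun i _ => by rw [e P i]
        _ = ∑ i ∈ s, (US (Q i) (insert g F)).card := by
            exact hU _ (Finset.insert_nonempty g F) (Finset.insert_subset hg hFN)
        _ = ∑ i ∈ s, (TS (Q i) {g} ∪ US (Q i) F).card := by
            refine Finset.sum_congr rfl fun i _ => by rw [e Q i]
    · -- |G| ≥ 2 : split off an element
      obtain ⟨b, hb⟩ := hne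
      set G₀ := G.erase b with hG₀
      have hbG : insert b G₀ = G := Finset.insert_erase hb
      have hG₀ne : G₀.Nonempty := by
        rw [← Finset.card_pos, Finset.card_erase_of_mem hb]; omega
      have hG₀c : G₀.card = G.card - 1 := Finset.card_erase_of_mem hb
      have hG₀N : G₀ ⊆ Finset.range N := (Finset.erase_subset b G).trans hGN
      have hbN : b ∈ Finset.range N := hGN hb
      -- |TS(insert b G₀) ∪ US F| = |TS G₀ ∪ US F| + |TS {b} ∪ US F| - |TS G₀ ∪ US (insert b F)|
      have step : ∀ R : ι → Finset ℕ, ∀ i : ι,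
          (TS (R i) G ∪ US (R i) F).card + (TS (R i) G₀ ∪ US (R i) (insert b F)).card
          = (TS (R i) G₀ ∪ US (R i) F).card + (TS (R i) {b} ∪ US (R i) F).card := by
        intro R i
        have h3 : TS (R i) G = TS (R i) G₀ ∩ tr (R i) b := by
          rw [← hbG, TS_insert hG₀ne]
        have h4 : TS (R i) G₀ ∪ US (R i) (insert b F) =
            TS (R i) G₀ ∪ tr (R i) b ∪ US (R i) F := by
          rw [US_insert, Finset.union_assoc]
        rw [h3, h4, TS_singleton]
        exact key_card (TS (R i) G₀) (tr (R i) b) (US (R i) F)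
      have sumP := Finset.sum_congr rfl (fun i (_ : i ∈ s) => step P i)
      have sumQ := Finset.sum_congr rfl (fun i (_ : i ∈ s) => step Q i)
      rw [Finset.sum_add_distrib, Finset.sum_add_distrib] at sumP sumQ
      have e1 := ih G₀ F (by omega) hG₀ne hG₀N hFN
      have e2 := ih G₀ (insert b F) (by omega) hG₀ne hG₀N (Finset.insert_subset hbN hFN)
      have e3 := ih {b} F (by simp; omega) (Finset.singleton_nonempty b)
        (Finset.singleton_subset_iff.2 hbN) hFN
      omega

/-- correlations equal (summed) from union-cards equal (summed). -/
lemma cor_eq_of_US_eq {ι : Type*} (s : Finset ι) (N : ℕ) (P Q : ι → Finset ℕ)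
    (hU : ∀ F : Finset ℕ, F.Nonempty → F ⊆ Finset.range N →
      (∑ i ∈ s, (US (P i) F).card) = ∑ i ∈ s, (US (Q i) F).card)
    (G : Finset ℕ) (hne : G.Nonempty) (hGN : G ⊆ Finset.range N) :
    (∑ i ∈ s, cor (P i) G) = ∑ i ∈ s, cor (Q i) G := by
  have := claimB s N P Q hU G.card G ∅ le_rfl hne hGN (Finset.empty_subset _)
  simpa [cor, US_empty] using this


lemma cor_eq_zero_of_card_lt {P G : Finset ℕ} (h : P.card < G.card) : cor P G = 0 := by
  have hne : G.Nonempty := Finset.card_pos.1 (by omega)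
  have : TS P G = ∅ := by
    rw [Finset.eq_empty_iff_forall_notMem]
    intro x hx
    rw [mem_TS hne] at hx
    have hinj : ∀ g ∈ G, x - g ∈ P := by
      intro g hg
      obtain ⟨p, hp, hpx⟩ := mem_tr.1 (hx g hg)
      have : x - g = p := by omega
      rwa [this]
    have : G.card ≤ P.card := by
      apply Finset.card_le_card_of_injOn (fun g => x - g) hinj
      intro g hg g' hg' hgg'
      obtain ⟨p, _, hpx⟩ := mem_tr.1 (hx g hg)
      obtain ⟨p', _, hpx'⟩ := mem_tr.1 (hx g' hg')
      have hgg2 : x - g = x - g' := hgg'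
      omega
    omega
  simp [cor, this]

lemma TS_image_add (P G : Finset ℕ) (c : ℕ) :
    TS (P.image (· + c)) G = (TS P G).image (· + c) := by
  rcases G.eq_empty_or_nonempty with rfl | hne
  · simp [TS, US]
  ext x
  rw [mem_TS hne, Finset.mem_image]
  constructor
  · intro h
    obtain ⟨g0, hg0⟩ := id hne
    obtain ⟨p0, hp0, he0⟩ := mem_tr.1 (h g0 hg0)
    obtain ⟨q0, hq0, rfl⟩ := Finset.mem_image.1 hp0
    refine ⟨x - c, ?_, by omega⟩
    rw [mem_TS hne]
    intro g hg
    obtain ⟨p, hp, he⟩ := mem_tr.1 (h g hg)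
    obtain ⟨q, hq, rfl⟩ := Finset.mem_image.1 hp
    exact mem_tr.2 ⟨q, hq, by omega⟩
  · rintro ⟨y, hy, rfl⟩
    rw [mem_TS hne] at hy
    intro g hg
    obtain ⟨p, hp, he⟩ := mem_tr.1 (hy g hg)
    exact mem_tr.2 ⟨p + c, Finset.mem_image.2 ⟨p, hp, rfl⟩, by omega⟩

lemma US_image_add (P F : Finset ℕ) (c : ℕ) :
    US (P.image (· + c)) F = (US P F).image (· + c) := by
  ext x
  simp only [mem_US, Finset.mem_image]
  constructor
  · rintro ⟨f, hf, h⟩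
    obtain ⟨p, hp, he⟩ := mem_tr.1 h
    obtain ⟨q, hq, rfl⟩ := Finset.mem_image.1 hp
    exact ⟨x - c, ⟨f, hf, mem_tr.2 ⟨q, hq, by omega⟩⟩, by omega⟩
  · rintro ⟨y, ⟨f, hf, h⟩, rfl⟩
    obtain ⟨p, hp, he⟩ := mem_tr.1 h
    exact ⟨f, hf, mem_tr.2 ⟨p + c, Finset.mem_image.2 ⟨p, hp, rfl⟩, by omega⟩⟩

lemma cor_of_shift {P Q : Finset ℕ} {a b : ℕ}
    (h : Q.image (· + a) = P.image (· + b)) (G : Finset ℕ) : cor Q G = cor P G := by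
  have := congrArg (fun S => TS S G) h
  simp only [TS_image_add] at this
  have := congrArg Finset.card this
  simpa [cor, Finset.card_image_of_injective _ (add_left_injective _)] using this

lemma US_card_of_shift {P Q : Finset ℕ} {a b : ℕ}
    (h : Q.image (· + a) = P.image (· + b)) (F : Finset ℕ) :
    (US Q F).card = (US P F).card := by
  have := congrArg (fun S => US S F) h
  simp only [US_image_add] at this
  have := congrArg Finset.card this
  simpa [Finset.card_image_of_injective _ (add_left_injective _)] using this

/-- normalization of the translate-set: subtracting a common lower bound. -/
lemma US_F_shift (P F : Finset ℕ) (m : ℕ) (hm : ∀ x ∈ F, m ≤ x) :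
    (US P F).card = (US P (F.image (fun x => x - m))).card := by
  have h : US P F = (US P (F.image (fun x => x - m))).image (· + m) := by
    ext x
    simp only [mem_US, Finset.mem_image]
    constructor
    · rintro ⟨f, hf, h⟩
      obtain ⟨p, hp, he⟩ := mem_tr.1 h
      have := hm f hf
      exact ⟨x - m, ⟨f - m, ⟨f, hf, rfl⟩, mem_tr.2 ⟨p, hp, by omega⟩⟩, by omega⟩
    · rintro ⟨y, ⟨g, ⟨f, hf, rfl⟩, h⟩, rfl⟩
      obtain ⟨p, hp, he⟩ := mem_tr.1 h
      have := hm f hf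
      exact ⟨f, hf, mem_tr.2 ⟨p, hp, by omega⟩⟩
  rw [h, Finset.card_image_of_injective _ (add_left_injective _)]

/-- THE SEPARATION LEMMA: from summed correlation equality, each level of the two
    chains is a translate. -/
lemma separation (n : ℕ) (P Q : ℕ → Finset ℕ)
    (hPn : ∀ i, 2 ≤ i → i ≤ n → (P i).card = n + 1 - i)
    (hQn : ∀ i, 2 ≤ i → i ≤ n → (Q i).card = n + 1 - i)
    (hPb : ∀ i, 2 ≤ i → i ≤ n → P i ⊆ Finset.Icc 1 n)
    (hsum : ∀ G : Finset ℕ, G.Nonempty → G ⊆ Finset.range n →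
       (∑ j ∈ Finset.Icc 2 n, cor (P j) G) = ∑ j ∈ Finset.Icc 2 n, cor (Q j) G) :
    ∀ i, 2 ≤ i → i ≤ n → ∃ a b, (Q i).image (· + a) = (P i).image (· + b) := by
  intro i
  induction i using Nat.strong_induction_on with
  | _ i ih =>
    intro h2 hn
    have hPne : (P i).Nonempty := Finset.card_pos.1 (by rw [hPn i h2 hn]; omega)
    set M := (P i).max' hPne with hM
    set Gs : Finset ℕ := (P i).image (fun p => M - p) with hGs
    have hGscard : Gs.card = (P i).card := by
      apply Finset.card_image_of_injOn
      intro p hp q hq hpq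
      have hpM := (P i).le_max' p hp
      have hqM := (P i).le_max' q hq
      have hpq2 : M - p = M - q := hpq
      omega
    have hGsne : Gs.Nonempty := by
      rw [← Finset.card_pos, hGscard]; exact Finset.card_pos.2 hPne
    have hGsb : Gs ⊆ Finset.range n := by
      intro g hg
      obtain ⟨p, hp, rfl⟩ := Finset.mem_image.1 hg
      have h1 := (Finset.mem_Icc.1 (hPb i h2 hn hp)).1
      have h2' := (Finset.mem_Icc.1 (hPb i h2 hn ((P i).max'_mem hPne))).2
      rw [Finset.mem_range]
      show M - p < n
      omega
    -- isolate level i in the sum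
    have hoff : ∀ j ∈ Finset.Icc 2 n, j ≠ i → cor (P j) Gs = cor (Q j) Gs := by
      intro j hj hji
      rw [Finset.mem_Icc] at hj
      rcases lt_or_gt_of_ne hji with hlt | hgt
      · obtain ⟨a, b, hab⟩ := ih j hlt hj.1 hj.2
        exact (cor_of_shift hab Gs).symm ▸ (cor_of_shift hab Gs).symm ▸ by
          rw [cor_of_shift hab Gs]
      · have hc : (P j).card < Gs.card := by
          rw [hGscard, hPn i h2 hn, hPn j hj.1 hj.2]; omega
        have hc' : (Q j).card < Gs.card := by
          rw [hGscard, hPn i h2 hn, hQn j hj.1 hj.2]; omega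
        rw [cor_eq_zero_of_card_lt hc, cor_eq_zero_of_card_lt hc']
    have hieq : cor (P i) Gs = cor (Q i) Gs := by
      have hmem : i ∈ Finset.Icc 2 n := Finset.mem_Icc.2 ⟨h2, hn⟩
      have hs := hsum Gs hGsne hGsb
      rw [← Finset.add_sum_erase _ _ hmem, ← Finset.add_sum_erase _ _ hmem] at hs
      have : ∑ j ∈ (Finset.Icc 2 n).erase i, cor (P j) Gs
           = ∑ j ∈ (Finset.Icc 2 n).erase i, cor (Q j) Gs := by
        apply Finset.sum_congr rfl
        intro j hj
        exact hoff j (Finset.mem_of_mem_erase hj) (Finset.ne_of_mem_erase hj)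
      omega
    -- P i itself gives an occurrence, so Q i has one too
    have hPocc : M ∈ TS (P i) Gs := by
      rw [mem_TS hGsne]
      intro g hg
      obtain ⟨p, hp, rfl⟩ := Finset.mem_image.1 hg
      exact mem_tr.2 ⟨p, hp, by have := (P i).le_max' p hp; omega⟩
    have hQpos : 0 < cor (Q i) Gs := by
      rw [← hieq]; exact Finset.card_pos.2 ⟨M, hPocc⟩
    obtain ⟨x, hx⟩ := Finset.card_pos.1 hQpos
    rw [mem_TS hGsne] at hx
    -- now  (P i).image (·+x) ⊆ (Q i).image (·+M), with equal cards
    refine ⟨M, x, ?_⟩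
    symm
    apply Finset.eq_of_subset_of_card_le
    · intro y hy
      obtain ⟨p, hp, rfl⟩ := Finset.mem_image.1 hy
      have hg : M - p ∈ Gs := Finset.mem_image.2 ⟨p, hp, rfl⟩
      obtain ⟨q, hq, hqe⟩ := mem_tr.1 (hx _ hg)
      have hpM := (P i).le_max' p hp
      exact Finset.mem_image.2 ⟨q, hq, by omega⟩
    · rw [Finset.card_image_of_injective _ (add_left_injective _),
          Finset.card_image_of_injective _ (add_left_injective _),
          hPn i h2 hn, hQn i h2 hn]

def mapc (w : Word) : List ℕ := w.map (fun x => (x : ℕ))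

lemma mapc_eq (w : Word) : mapc w = List.map PNat.val w := by
  induction w with
  | nil => rfl
  | cons a w ih =>
    simp only [mapc] at ih ⊢
    rw [show ((do let a ← (a::w); pure ((a:ℕ))) : List ℕ)
        = (a:ℕ) :: (do let x ← w; pure ((x:ℕ))) from rfl]
    simp only [List.map_cons, ih.symm]

lemma length_mapc (w : Word) : (mapc w).length = w.length := by
  rw [mapc_eq, List.length_map]

def val (w : Word) (p : ℕ) : ℕ := ((w.getD p 1 : ℕ+) : ℕ)

lemma pos_def (u : Word) (k : ℕ) : pos u k = (mapc u).idxOf k + 1 := rfl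
lemma ht_def (w : Word) : ht w = (mapc w).sum := rfl
lemma isPerm_count {n : ℕ} {w : Word} (h : IsPerm n w) :
    ∀ k : ℕ, 1 ≤ k → k ≤ n → (mapc w).count k = 1 := h.2

lemma pos_pos (u : Word) (k : ℕ) : 1 ≤ pos u k := Nat.le_add_left _ _

lemma val_pos {w : Word} {q : ℕ} (h : q < w.length) : 1 ≤ val w q := (w.getD q 1).one_le

lemma val_mapc {w : Word} {q : ℕ} (h : q < w.length) :
    (mapc w)[q]'(by rw [length_mapc]; exact h) = val w q := by
  simp only [mapc_eq, List.getElem_map]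
  rw [val, List.getD_eq_getElem _ _ h]

section perm
variable {n : ℕ} {u : Word} (hu : IsPerm n u)
include hu

lemma perm_multiset : ((mapc u : List ℕ) : Multiset ℕ) = (Finset.Icc 1 n).val := by
  apply (Multiset.eq_of_le_of_card_le _ _).symm
  · rw [Multiset.le_iff_count]
    intro a
    by_cases ha : a ∈ Finset.Icc 1 n
    · have h1 : Multiset.count a (Finset.Icc 1 n).val = 1 :=
        Multiset.count_eq_one_of_mem (Finset.Icc 1 n).nodup ha
      rw [h1, Multiset.coe_count]
      rw [Finset.mem_Icc] at ha
      rw [isPerm_count hu a ha.1 ha.2]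
    · rw [Multiset.count_eq_zero_of_notMem ha]
      omega
  · have h1 : Multiset.card (Finset.Icc 1 n).val = (Finset.Icc 1 n).card := rfl
    rw [h1, Multiset.coe_card, length_mapc, hu.1, Nat.card_Icc]
    omega

lemma perm_mem_iff {a : ℕ} : a ∈ mapc u ↔ 1 ≤ a ∧ a ≤ n := by
  rw [← Multiset.mem_coe, perm_multiset hu, ← Finset.mem_def, Finset.mem_Icc]

lemma perm_nodup : (mapc u).Nodup := by
  have := (Finset.Icc 1 n).nodup
  rw [← perm_multiset hu] at this
  exact this

lemma perm_val_mem {p : ℕ} (hp : p < n) : 1 ≤ val u p ∧ val u p ≤ n := by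
  have hlen : p < u.length := by rw [hu.1]; exact hp
  have : val u p ∈ mapc u := by
    rw [← val_mapc hlen]
    exact List.getElem_mem _
  exact (perm_mem_iff hu).1 this

lemma perm_pos {k : ℕ} (h1 : 1 ≤ k) (h2 : k ≤ n) :
    1 ≤ pos u k ∧ pos u k ≤ n ∧ val u (pos u k - 1) = k := by
  have hmem : k ∈ mapc u := (perm_mem_iff hu).2 ⟨h1, h2⟩
  have hlt : List.idxOf k (mapc u) < (mapc u).length := List.idxOf_lt_length_iff.2 hmem
  have hlt' : List.idxOf k (mapc u) < u.length := by rwa [length_mapc] at hlt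
  have hval := List.getElem_idxOf hlt
  rw [val_mapc hlt'] at hval
  refine ⟨pos_pos u k, ?_, ?_⟩
  · rw [pos_def, ← hu.1]; omega
  · rw [pos_def]
    simpa using hval

lemma perm_pos_val {p : ℕ} (hp : p < n) : pos u (val u p) = p + 1 := by
  have hlen : p < u.length := by rw [hu.1]; exact hp
  have hlen' : p < (mapc u).length := by rwa [length_mapc]
  have := List.Nodup.idxOf_getElem (perm_nodup hu) p hlen'
  rw [val_mapc hlen] at this
  rw [pos_def, this]

lemma perm_pos_inj {k k' : ℕ} (h1 : 1 ≤ k) (h2 : k ≤ n) (h1' : 1 ≤ k') (h2' : k' ≤ n)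
    (h : pos u k = pos u k') : k = k' := by
  have a := (perm_pos hu h1 h2).2.2
  have b := (perm_pos hu h1' h2').2.2
  rw [h] at a
  rw [← a, b]

end perm

/-- positions of letters ≥ i -/
def Pset (u : Word) (n i : ℕ) : Finset ℕ := (Finset.Icc i n).image (pos u)

section pset
variable {n : ℕ} {u : Word} (hu : IsPerm n u)
include hu

lemma card_Pset {i : ℕ} (hi : 1 ≤ i) : (Pset u n i).card = n + 1 - i := by
  rw [Pset, Finset.card_image_of_injOn, Nat.card_Icc]
  intro k hk k' hk' h
  rw [Finset.mem_coe, Finset.mem_Icc] at hk hk'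
  exact perm_pos_inj hu (by omega) hk.2 (by omega) hk'.2 h

lemma mem_Pset {i q : ℕ} (hi : 1 ≤ i) :
    q ∈ Pset u n i ↔ 1 ≤ q ∧ q ≤ n ∧ i ≤ val u (q - 1) := by
  rw [Pset, Finset.mem_image]
  constructor
  · rintro ⟨k, hk, rfl⟩
    rw [Finset.mem_Icc] at hk
    obtain ⟨a, b, c⟩ := perm_pos hu (by omega) hk.2
    exact ⟨a, b, by rw [c]; exact hk.1⟩
  · rintro ⟨h1, h2, h3⟩
    refine ⟨val u (q - 1), ?_, ?_⟩
    · rw [Finset.mem_Icc]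
      exact ⟨h3, (perm_val_mem hu (by omega)).2⟩
    · rw [perm_pos_val hu (by omega)]; omega

lemma Pset_subset {i : ℕ} (hi : 1 ≤ i) : Pset u n i ⊆ Finset.Icc 1 n := by
  intro q hq
  rw [mem_Pset hu hi] at hq
  rw [Finset.mem_Icc]
  exact ⟨hq.1, hq.2.1⟩

lemma Pset_one : Pset u n 1 = Finset.Icc 1 n := by
  apply Finset.eq_of_subset_of_card_le (Pset_subset hu le_rfl)
  rw [card_Pset hu le_rfl, Nat.card_Icc]

end pset

/-- bridge: the biUnion of shifted sets equals US of the position set -/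
lemma AB_eq_US {n : ℕ} {u : Word} {i : ℕ} {E : Finset ℕ}
    (hE : ∀ e ∈ E, 1 ≤ e) :
    (Finset.Icc i n).biUnion (fun j => shiftSet (pos u j) E)
      = US (Pset u n i) (E.image (fun e => e - 1)) := by
  ext x
  simp only [Finset.mem_biUnion, mem_US, shiftSet, Finset.mem_image, mem_tr, Pset]
  constructor
  · rintro ⟨j, hj, e, he, rfl⟩
    refine ⟨e - 1, ⟨e, he, rfl⟩, pos u j, ⟨j, hj, rfl⟩, ?_⟩
    have h1 : 1 ≤ pos u j := pos_pos u j
    have h2 := hE e he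
    omega
  · rintro ⟨f, ⟨e, he, rfl⟩, q, ⟨j, hj, rfl⟩, rfl⟩
    refine ⟨j, hj, e, he, ?_⟩
    have h1 : 1 ≤ pos u j := pos_pos u j
    have h2 := hE e he
    omega

lemma card_shiftSet (p : ℕ) (E : Finset ℕ) : (shiftSet p E).card = E.card :=
  Finset.card_image_of_injective _ (fun a b h => by omega)


/-! ### floors and cluster heights -/

def fl (u : Word) (S : Finset ℕ) (p : ℕ) : ℕ :=
  max 1 (S.sup fun e => if e ≤ p ∧ p < e + u.length then val u (p - e) else 0)

lemma one_le_fl {u S p} : 1 ≤ fl u S p := le_max_left 1 _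

lemma fl_le {n : ℕ} {u : Word} (hu : IsPerm n u) (hn : 1 ≤ n) (S : Finset ℕ) (p : ℕ) :
    fl u S p ≤ n := by
  apply max_le hn
  apply Finset.sup_le
  intro e _
  split_ifs with h
  · exact (perm_val_mem hu (by rw [← hu.1]; omega)).2
  · exact Nat.zero_le n

lemma fl_ge_iff {u : Word} {S : Finset ℕ} {p i : ℕ} (h2 : 2 ≤ i) :
    i ≤ fl u S p ↔ ∃ e ∈ S, e ≤ p ∧ p < e + u.length ∧ i ≤ val u (p - e) := by
  rw [fl, le_max_iff]
  have h1 : ¬ i ≤ 1 := by omega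
  rw [Finset.le_sup_iff (show (0:ℕ) < i by omega)]
  constructor
  · rintro (h | ⟨e, he, hite⟩)
    · omega
    · by_cases hc : e ≤ p ∧ p < e + u.length
      · rw [if_pos hc] at hite; exact ⟨e, he, hc.1, hc.2, hite⟩
      · rw [if_neg hc] at hite; omega
  · rintro ⟨e, he, hc1, hc2, hv⟩
    exact Or.inr ⟨e, he, by rw [if_pos ⟨hc1, hc2⟩]; exact hv⟩

lemma filter_fl_eq_US {n : ℕ} {u : Word} (hu : IsPerm n u) {i L : ℕ} (h2 : 2 ≤ i)
    {S : Finset ℕ} (hS1 : ∀ e ∈ S, 1 ≤ e) (hfit : ∀ e ∈ S, e + n ≤ L + 1) :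
    (Finset.Icc 1 L).filter (fun p => i ≤ fl u S p)
      = US (Pset u n i) (S.image (fun e => e - 1)) := by
  ext p
  rw [Finset.mem_filter, Finset.mem_Icc, fl_ge_iff h2, mem_US]
  constructor
  · rintro ⟨⟨hp1, hpL⟩, e, he, he1, he2, he3⟩
    rw [hu.1] at he2
    have h1 := hS1 e he
    refine ⟨e - 1, Finset.mem_image.2 ⟨e, he, rfl⟩, mem_tr.2 ⟨p - e + 1, ?_, by omega⟩⟩
    rw [mem_Pset hu (by omega)]
    refine ⟨by omega, by omega, ?_⟩
    have : p - e + 1 - 1 = p - e := by omega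
    rw [this]
    exact le_trans (by omega) he3
  · rintro ⟨f, hf, h⟩
    obtain ⟨e, he, rfl⟩ := Finset.mem_image.1 hf
    obtain ⟨q, hq, hqe⟩ := mem_tr.1 h
    rw [mem_Pset hu (by omega)] at hq
    have h1 := hS1 e he
    have h2' := hfit e he
    obtain ⟨hq1, hq2, hq3⟩ := hq
    refine ⟨⟨by omega, by omega⟩, e, he, by omega, by rw [hu.1]; omega, ?_⟩
    have : p - e = q - 1 := by omega
    rw [this]
    exact hq3

/-- height of the minimal cluster floor on `[1,L]` -/
def htm (u : Word) (S : Finset ℕ) (L : ℕ) : ℕ := ∑ p ∈ Finset.Icc 1 L, fl u S p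

lemma fl_split {n : ℕ} {u : Word} (hu : IsPerm n u) (hn : 1 ≤ n) (S : Finset ℕ) (p : ℕ) :
    fl u S p = 1 + ∑ i ∈ Finset.Icc 2 n, (if i ≤ fl u S p then 1 else 0) := by
  have h1 : ∑ i ∈ Finset.Icc 2 n, (if i ≤ fl u S p then 1 else 0)
      = ((Finset.Icc 2 n).filter (fun i => i ≤ fl u S p)).card := by
    rw [Finset.card_filter]
  have h2 : (Finset.Icc 2 n).filter (fun i => i ≤ fl u S p) = Finset.Icc 2 (fl u S p) := by
    ext j
    rw [Finset.mem_filter, Finset.mem_Icc, Finset.mem_Icc]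
    have := fl_le hu hn S p
    omega
  rw [h1, h2, Nat.card_Icc]
  have := @one_le_fl u S p
  omega

lemma sum_Icc_one {M : Type*} [AddCommMonoid M] (f : ℕ → M) (L : ℕ) :
    ∑ p ∈ Finset.Icc 1 L, f p = ∑ q ∈ Finset.range L, f (q + 1) := by
  have h : Finset.Icc 1 L = (Finset.range L).image (· + 1) := by
    ext x
    simp only [Finset.mem_Icc, Finset.mem_image, Finset.mem_range]
    constructor
    · intro hx; exact ⟨x - 1, by omega, by omega⟩
    · rintro ⟨q, hq, rfl⟩; omega
  rw [h, Finset.sum_image (fun a _ b _ h => by omega)]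

lemma htm_eq {n : ℕ} {u : Word} (hu : IsPerm n u) (hn : 1 ≤ n) {S : Finset ℕ} {L : ℕ}
    (hS1 : ∀ e ∈ S, 1 ≤ e) (hfit : ∀ e ∈ S, e + n ≤ L + 1) :
    htm u S L = L + ∑ i ∈ Finset.Icc 2 n, (US (Pset u n i) (S.image (fun e => e - 1))).card := by
  rw [htm]
  have step1 : ∑ p ∈ Finset.Icc 1 L, fl u S p
      = ∑ p ∈ Finset.Icc 1 L, (1 + ∑ i ∈ Finset.Icc 2 n, (if i ≤ fl u S p then 1 else 0)) :=
    Finset.sum_congr rfl (fun p _ => fl_split hu hn S p)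
  rw [step1, Finset.sum_add_distrib, Finset.sum_const, Nat.card_Icc, smul_eq_mul, mul_one]
  have hL : L + 1 - 1 = L := by omega
  rw [hL]
  congr 1
  rw [Finset.sum_comm]
  apply Finset.sum_congr rfl
  intro i hi
  rw [Finset.mem_Icc] at hi
  rw [← filter_fl_eq_US hu hi.1 hS1 hfit, Finset.card_filter]

/-! ### words, heights, embeddings -/

lemma ht_sum (w : Word) : ht w = ∑ q ∈ Finset.range w.length, val w q := by
  rw [ht_def, mapc_eq]
  induction w with
  | nil => simp
  | cons a l ih =>
    rw [List.map_cons, List.sum_cons, List.length_cons, Finset.sum_range_succ']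
    have h1 : ∀ q, val (a :: l) (q + 1) = val l q := fun q => rfl
    have h2 : val (a :: l) 0 = (a : ℕ) := rfl
    simp only [h1, h2]
    rw [← ih]
    omega

lemma ht_sum' {w : Word} {L : ℕ} (hw : w.length = L) :
    ht w = ∑ p ∈ Finset.Icc 1 L, val w (p - 1) := by
  rw [ht_sum, hw, sum_Icc_one (fun p => val w (p - 1)) L]
  simp

lemma word_ext {w w' : Word} (hl : w.length = w'.length)
    (h : ∀ q, q < w.length → val w q = val w' q) : w = w' := by
  apply List.ext_getElem hl
  intro q h1 h2
  have h3 := h q h1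
  rw [val, val, List.getD_eq_getElem _ _ h1, List.getD_eq_getElem _ _ h2] at h3
  exact PNat.coe_injective h3

lemma mem_Em_iff {u w : Word} {j : ℕ} :
    j ∈ Em u w ↔ 1 ≤ j ∧ j - 1 + u.length ≤ w.length ∧
      ∀ k, k < u.length → val u k ≤ val w (j - 1 + k) := by
  show (1 ≤ j ∧ _ ∧ _) ↔ _
  constructor
  · rintro ⟨a, b, c⟩
    exact ⟨a, b, fun k hk => (PNat.coe_le_coe _ _).2 (c k hk)⟩
  · rintro ⟨a, b, c⟩
    exact ⟨a, b, fun k hk => (PNat.coe_le_coe _ _).1 (c k hk)⟩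

lemma floor_iff {n : ℕ} {u w : Word} (hu : IsPerm n u) {S : Finset ℕ} {L : ℕ}
    (hw : w.length = L) (hS1 : ∀ e ∈ S, 1 ≤ e) (hfit : ∀ e ∈ S, e + n ≤ L + 1) :
    (↑S ⊆ Em u w) ↔ ∀ p ∈ Finset.Icc 1 L, fl u S p ≤ val w (p - 1) := by
  constructor
  · intro hsub p hp
    rw [Finset.mem_Icc] at hp
    apply max_le
    · exact val_pos (by omega : p - 1 < w.length)
    · apply Finset.sup_le
      intro e he
      split_ifs with hc
      · have hj := hsub (Finset.mem_coe.2 he)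
        rw [mem_Em_iff] at hj
        have h3 := hj.2.2 (p - e) (by omega)
        have h4 : e - 1 + (p - e) = p - 1 := by have := hS1 e he; omega
        rwa [h4] at h3
      · exact Nat.zero_le _
  · intro hfl j hj
    rw [Finset.mem_coe] at hj
    rw [mem_Em_iff]
    have h1 := hS1 j hj
    have h2 := hfit j hj
    refine ⟨h1, by rw [hu.1, hw]; omega, ?_⟩
    intro k hk
    have hkn : k < n := by rwa [hu.1] at hk
    have hp : j + k ∈ Finset.Icc 1 L := by rw [Finset.mem_Icc]; omega
    have h3 := hfl (j + k) hp
    have h4 : val u k ≤ fl u S (j + k) := by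
      refine le_trans ?_ (le_max_right 1 _)
      have h5 := Finset.le_sup (f := fun e => if e ≤ j + k ∧ j + k < e + u.length
        then val u (j + k - e) else 0) hj
      have h5' : (if j ≤ j + k ∧ j + k < j + u.length then val u (j + k - j) else 0)
          ≤ S.sup fun e => if e ≤ j + k ∧ j + k < e + u.length then val u (j + k - e) else 0 := h5
      have hcl : j + k < j + u.length := by rw [hu.1]; omega
      rw [if_pos ⟨by omega, hcl⟩] at h5'
      have h6 : j + k - j = k := by omega
      rwa [h6] at h5'
    have h7 : j + k - 1 = j - 1 + k := by omega
    calc val u k ≤ val w (j + k - 1) := le_trans h4 h3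
    _ = val w (j - 1 + k) := by rw [h7]

/-- the minimal word above the floor -/
def wfl (u : Word) (S : Finset ℕ) (L : ℕ) : Word :=
  (List.range L).map (fun q => (fl u S (q + 1)).toPNat')

lemma length_wfl {u S L} : (wfl u S L).length = L := by simp [wfl]

lemma val_wfl {u S L q} (hq : q < L) : val (wfl u S L) q = fl u S (q + 1) := by
  rw [val, wfl, List.getD_eq_getElem _ _ (by simp; exact hq), List.getElem_map,
    List.getElem_range]
  have := @one_le_fl u S (q + 1)
  simp [Nat.toPNat', Nat.succPNat]
  omega

lemma ht_wfl {u S L} : ht (wfl u S L) = htm u S L := by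
  rw [ht_sum, length_wfl, htm, sum_Icc_one (fl u S) L]
  apply Finset.sum_congr rfl
  intro q hq
  rw [Finset.mem_range] at hq
  rw [val_wfl hq]

/-! ### finite sets of words -/

lemma ht_cons (a : ℕ+) (w : Word) : ht (a :: w) = (a : ℕ) + ht w := by
  rw [ht_def, ht_def, mapc_eq, mapc_eq, List.map_cons, List.sum_cons]

def WS : ℕ → ℕ → Finset Word
  | 0, h => if h = 0 then {([] : Word)} else ∅
  | (L+1), h => (Finset.Icc 1 h).biUnion fun a => (WS L (h - a)).image (fun w => a.toPNat' :: w)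

lemma toPNat'_coe {m : ℕ} (h : 1 ≤ m) : ((m.toPNat' : ℕ+) : ℕ) = m := by
  simp [Nat.toPNat', Nat.succPNat]; omega

lemma pnat_toPNat' (b : ℕ+) : ((b : ℕ).toPNat') = b := by
  apply PNat.coe_injective
  exact toPNat'_coe b.one_le

lemma mem_WS : ∀ L h (w : Word), w ∈ WS L h ↔ w.length = L ∧ ht w = h := by
  intro L
  induction L with
  | zero =>
    intro h w
    rw [WS]
    split_ifs with h0
    · subst h0
      simp only [Finset.mem_singleton]
      constructor
      · rintro rfl; exact ⟨rfl, rfl⟩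
      · rintro ⟨hl, _⟩; exact List.length_eq_zero_iff.1 hl
    · simp only [Finset.notMem_empty, false_iff]
      rintro ⟨hl, hh⟩
      obtain rfl := List.length_eq_zero_iff.1 hl
      exact h0 (by rw [← hh]; rfl)
  | succ L ih =>
    intro h w
    rw [WS]
    simp only [Finset.mem_biUnion, Finset.mem_image, Finset.mem_Icc]
    constructor
    · rintro ⟨a, ⟨ha1, ha2⟩, w', hw', rfl⟩
      obtain ⟨hl, hh⟩ := (ih _ w').1 hw'
      refine ⟨by simp [hl], ?_⟩
      rw [ht_cons, hh, toPNat'_coe ha1]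
      omega
    · rintro ⟨hl, hh⟩
      cases w with
      | nil => simp at hl
      | cons b w' =>
        have hb := b.one_le
        have hht : ht (b :: w') = (b : ℕ) + ht w' := ht_cons b w'
        refine ⟨(b : ℕ), ⟨hb, by omega⟩, w', ?_, by rw [pnat_toPNat']⟩
        rw [ih]
        constructor
        · simpa using hl
        · omega

open scoped Classical in
/-- embedding set as a Finset -/
noncomputable def EmF (u w : Word) : Finset ℕ :=
  (Finset.Icc 1 (w.length + 1 - u.length)).filter (fun j => j ∈ Em u w)

open scoped Classical in
lemma mem_EmF {n : ℕ} {u w : Word} (hu : u.length = n) (hn : 1 ≤ n) {j : ℕ} :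
    j ∈ EmF u w ↔ j ∈ Em u w := by
  rw [EmF, Finset.mem_filter, Finset.mem_Icc]
  constructor
  · exact fun h => h.2
  · intro h
    have h2 := mem_Em_iff.1 h
    rw [hu] at h2
    exact ⟨⟨h2.1, by omega⟩, h⟩

lemma coe_EmF {n : ℕ} {u w : Word} (hu : u.length = n) (hn : 1 ≤ n) :
    (↑(EmF u w) : Set ℕ) = Em u w := by
  ext j
  rw [Finset.mem_coe, mem_EmF hu hn]

open scoped Classical in
lemma EmF_subset {u w : Word} : EmF u w ⊆ Finset.Icc 1 (w.length + 1 - u.length) := by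
  intro j hj
  rw [EmF, Finset.mem_filter] at hj
  exact hj.1

/-! ### the floor-shift bijection -/

def shiftW (u v : Word) (S : Finset ℕ) (L : ℕ) (w : Word) : Word :=
  (List.range L).map (fun q => (val w q - fl u S (q + 1) + fl v S (q + 1)).toPNat')

lemma length_shiftW {u v S L w} : (shiftW u v S L w).length = L := by simp [shiftW]

lemma val_shiftW {u v : Word} {S : Finset ℕ} {L : ℕ} {w : Word} {q : ℕ} (hq : q < L) :
    val (shiftW u v S L w) q = val w q - fl u S (q + 1) + fl v S (q + 1) := by
  rw [val, shiftW, List.getD_eq_getElem _ _ (by simp; exact hq), List.getElem_map,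
    List.getElem_range]
  apply toPNat'_coe
  have := @one_le_fl v S (q + 1)
  omega

lemma shiftW_floor {u v : Word} {S : Finset ℕ} {L : ℕ} {w : Word}
    (hfloor : ∀ p ∈ Finset.Icc 1 L, fl u S p ≤ val w (p - 1)) :
    ∀ p ∈ Finset.Icc 1 L, fl v S p ≤ val (shiftW u v S L w) (p - 1) := by
  intro p hp
  have hp' := Finset.mem_Icc.1 hp
  have hq : p - 1 < L := by omega
  rw [val_shiftW hq]
  have h1 : p - 1 + 1 = p := by omega
  rw [h1]
  omega

lemma ht_shiftW {u v : Word} {S : Finset ℕ} {L : ℕ} {w : Word} (hw : w.length = L)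
    (hfloor : ∀ p ∈ Finset.Icc 1 L, fl u S p ≤ val w (p - 1)) :
    ht (shiftW u v S L w) + htm u S L = ht w + htm v S L := by
  rw [ht_sum' (length_shiftW : (shiftW u v S L w).length = L), ht_sum' hw, htm, htm,
    ← Finset.sum_add_distrib, ← Finset.sum_add_distrib]
  apply Finset.sum_congr rfl
  intro p hp
  have hp' := Finset.mem_Icc.1 hp
  have hq : p - 1 < L := by omega
  have h1 : p - 1 + 1 = p := by omega
  rw [val_shiftW hq, h1]
  have h2 := hfloor p hp
  omega

lemma shiftW_shiftW {u v : Word} {S : Finset ℕ} {L : ℕ} {w : Word} (hw : w.length = L)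
    (hfloor : ∀ p ∈ Finset.Icc 1 L, fl u S p ≤ val w (p - 1)) :
    shiftW v u S L (shiftW u v S L w) = w := by
  apply word_ext (by rw [length_shiftW, hw])
  intro q hq
  rw [length_shiftW] at hq
  rw [val_shiftW hq, val_shiftW hq]
  have h2 := hfloor (q + 1) (Finset.mem_Icc.2 ⟨by omega, by omega⟩)
  have h3 : q + 1 - 1 = q := by omega
  rw [h3] at h2
  omega

open scoped Classical in
/-- equality of superset-counts, from equal floor heights -/
lemma card_sup_eq {n : ℕ} {u v : Word} (hu : IsPerm n u) (hv : IsPerm n v)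
    {S : Finset ℕ} {L : ℕ} (hS1 : ∀ e ∈ S, 1 ≤ e) (hfit : ∀ e ∈ S, e + n ≤ L + 1)
    (hhtm : htm u S L = htm v S L) (h : ℕ) :
    ((WS L h).filter (fun w => (↑S : Set ℕ) ⊆ Em u w)).card
      = ((WS L h).filter (fun w => (↑S : Set ℕ) ⊆ Em v w)).card := by
  classical
  apply Finset.card_bij' (fun w _ => shiftW u v S L w) (fun w _ => shiftW v u S L w)
  · intro w hw
    rw [Finset.mem_filter, mem_WS] at hw
    obtain ⟨⟨hl, hht⟩, hem⟩ := hw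
    have hfloor := (floor_iff hu hl hS1 hfit).1 hem
    rw [Finset.mem_filter, mem_WS]
    refine ⟨⟨length_shiftW, ?_⟩, ?_⟩
    · have := ht_shiftW (v := v) hl hfloor
      omega
    · exact (floor_iff hv (length_shiftW : (shiftW u v S L w).length = L) hS1 hfit).2
        (shiftW_floor hfloor)
  · intro w hw
    rw [Finset.mem_filter, mem_WS] at hw
    obtain ⟨⟨hl, hht⟩, hem⟩ := hw
    have hfloor := (floor_iff hv hl hS1 hfit).1 hem
    rw [Finset.mem_filter, mem_WS]
    refine ⟨⟨length_shiftW, ?_⟩, ?_⟩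
    · have := ht_shiftW (v := u) hl hfloor
      omega
    · exact (floor_iff hu (length_shiftW : (shiftW v u S L w).length = L) hS1 hfit).2
        (shiftW_floor hfloor)
  · intro w hw
    rw [Finset.mem_filter, mem_WS] at hw
    exact shiftW_shiftW hw.1.1 ((floor_iff hu hw.1.1 hS1 hfit).1 hw.2)
  · intro w hw
    rw [Finset.mem_filter, mem_WS] at hw
    exact shiftW_shiftW hw.1.1 ((floor_iff hv hw.1.1 hS1 hfit).1 hw.2)

/-! ### counting words by embedding sets -/

open scoped Classical

noncomputable def Nsup (u : Word) (L h : ℕ) (S : Finset ℕ) : ℕ :=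
  ((WS L h).filter (fun w => (↑S : Set ℕ) ⊆ Em u w)).card

noncomputable def Nex (u : Word) (L h : ℕ) (S : Finset ℕ) : ℕ :=
  ((WS L h).filter (fun w => EmF u w = S)).card

lemma subset_EmF_iff {n : ℕ} {u w : Word} (hu : u.length = n) (hn : 1 ≤ n) {S : Finset ℕ} :
    (↑S : Set ℕ) ⊆ Em u w ↔ S ⊆ EmF u w := by
  constructor
  · intro h j hj
    exact (mem_EmF hu hn).2 (h (Finset.mem_coe.2 hj))
  · intro h j hj
    exact (mem_EmF hu hn).1 (h (Finset.mem_coe.1 hj))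

lemma Nsup_eq_of_htm {n : ℕ} {u v : Word} (hu : IsPerm n u) (hv : IsPerm n v)
    (HC : ∀ S : Finset ℕ, S.Nonempty → (∀ e ∈ S, 1 ≤ e) →
      ∀ L, (∀ e ∈ S, e + n ≤ L + 1) → htm u S L = htm v S L)
    (L h : ℕ) (S : Finset ℕ) : Nsup u L h S = Nsup v L h S := by
  by_cases hbad : ∃ e ∈ S, e = 0 ∨ L + 1 < e + n
  · -- both sides are empty counts
    obtain ⟨e, he, hor⟩ := hbad
    have hzero : ∀ z : Word, IsPerm n z →
        ((WS L h).filter (fun w => (↑S : Set ℕ) ⊆ Em z w)).card = 0 := by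
      intro z hz
      rw [Finset.card_eq_zero, Finset.eq_empty_iff_forall_notMem]
      intro w hw
      rw [Finset.mem_filter, mem_WS] at hw
      have hem := hw.2 (Finset.mem_coe.2 he)
      rw [mem_Em_iff] at hem
      obtain ⟨h1, h2, _⟩ := hem
      rw [hz.1, hw.1.1] at h2
      omega
    rw [Nsup, Nsup, hzero u hu, hzero v hv]
  · push_neg at hbad
    rcases S.eq_empty_or_nonempty with rfl | hne
    · simp [Nsup]
    · have hS1 : ∀ e ∈ S, 1 ≤ e := fun e he => by have := (hbad e he).1; omega
      have hfit : ∀ e ∈ S, e + n ≤ L + 1 := fun e he => (hbad e he).2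
      exact card_sup_eq hu hv hS1 hfit (HC S hne hS1 L hfit) h

lemma partition_Nsup {n : ℕ} {u : Word} (hul : u.length = n) (hn : 1 ≤ n)
    (L h : ℕ) (S : Finset ℕ) (hS : S ⊆ Finset.Icc 1 (L + 1 - n)) :
    Nsup u L h S = ∑ T ∈ (Finset.Icc 1 (L + 1 - n)).powerset.filter (fun T => S ⊆ T),
      Nex u L h T := by
  have hdecomp : (WS L h).filter (fun w => (↑S : Set ℕ) ⊆ Em u w)
      = ((Finset.Icc 1 (L + 1 - n)).powerset.filter (fun T => S ⊆ T)).biUnion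
          (fun T => (WS L h).filter (fun w => EmF u w = T)) := by
    ext w
    simp only [Finset.mem_biUnion, Finset.mem_filter, Finset.mem_powerset]
    constructor
    · rintro ⟨hw, hsub⟩
      refine ⟨EmF u w, ⟨?_, (subset_EmF_iff hul hn).1 hsub⟩, hw, rfl⟩
      have := EmF_subset (u := u) (w := w)
      rwa [hul, ((mem_WS L h w).1 hw).1] at this
    · rintro ⟨T, ⟨hT, hST⟩, hw, rfl⟩
      exact ⟨hw, (subset_EmF_iff hul hn).2 hST⟩
  rw [Nsup, hdecomp, Finset.card_biUnion]
  · rfl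
  · intro T hT T' hT' hne
    apply Finset.disjoint_left.2
    intro w hw hw'
    rw [Finset.mem_filter] at hw hw'
    exact hne (hw.2 ▸ hw'.2)

lemma Nex_eq_of_htm {n : ℕ} {u v : Word} (hu : IsPerm n u) (hv : IsPerm n v) (hn : 1 ≤ n)
    (HC : ∀ S : Finset ℕ, S.Nonempty → (∀ e ∈ S, 1 ≤ e) →
      ∀ L, (∀ e ∈ S, e + n ≤ L + 1) → htm u S L = htm v S L)
    (L h : ℕ) : ∀ (S : Finset ℕ), Nex u L h S = Nex v L h S := by
  set K := L + 1 - n with hK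
  have main : ∀ m, ∀ S ∈ (Finset.Icc 1 K).powerset, K - S.card ≤ m →
      Nex u L h S = Nex v L h S := by
    intro m
    induction m using Nat.strong_induction_on with
    | _ m ih =>
      intro S hSp hSm
      rw [Finset.mem_powerset] at hSp
      have hScard : S.card ≤ K := le_trans (Finset.card_le_card hSp) (by rw [Nat.card_Icc]; omega)
      -- split the partition identity
      have hsplit : ∀ z : Word, z.length = n →
          Nsup z L h S = Nex z L h S +
            ∑ T ∈ (Finset.Icc 1 K).powerset.filter (fun T => S ⊂ T), Nex z L h T := by
        intro z hz
        rw [partition_Nsup hz hn L h S hSp]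
        have hins : (Finset.Icc 1 K).powerset.filter (fun T => S ⊆ T)
            = insert S ((Finset.Icc 1 K).powerset.filter (fun T => S ⊂ T)) := by
          ext T
          simp only [Finset.mem_insert, Finset.mem_filter, Finset.mem_powerset]
          constructor
          · rintro ⟨hT, hST⟩
            rcases eq_or_ne T S with rfl | hne
            · exact Or.inl rfl
            · exact Or.inr ⟨hT, Finset.ssubset_iff_subset_ne.2 ⟨hST, hne.symm⟩⟩
          · rintro (rfl | ⟨hT, hST⟩)
            · exact ⟨hSp, le_rfl⟩
            · exact ⟨hT, hST.subset⟩
        rw [hins, Finset.sum_insert]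
        intro hcontra
        rw [Finset.mem_filter] at hcontra
        exact (ssubset_irrefl S) hcontra.2
      have hsums : ∑ T ∈ (Finset.Icc 1 K).powerset.filter (fun T => S ⊂ T), Nex u L h T
          = ∑ T ∈ (Finset.Icc 1 K).powerset.filter (fun T => S ⊂ T), Nex v L h T := by
        apply Finset.sum_congr rfl
        intro T hT
        rw [Finset.mem_filter, Finset.mem_powerset] at hT
        have h1 : S.card < T.card := Finset.card_lt_card hT.2
        have h2 : T.card ≤ K := le_trans (Finset.card_le_card hT.1) (by rw [Nat.card_Icc]; omega)
        exact ih (K - T.card) (by omega) T (Finset.mem_powerset.2 hT.1) le_rfl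
      have e1 := hsplit u hu.1
      have e2 := hsplit v hv.1
      have e3 := Nsup_eq_of_htm hu hv HC L h S
      omega
  intro S
  by_cases hSp : S ⊆ Finset.Icc 1 K
  · exact main (K - S.card) S (Finset.mem_powerset.2 hSp) le_rfl
  · -- EmF is always inside Icc 1 K, so both counts vanish
    have hzero : ∀ z : Word, z.length = n → Nex z L h S = 0 := by
      intro z hz
      rw [Nex, Finset.card_eq_zero, Finset.eq_empty_iff_forall_notMem]
      intro w hw
      rw [Finset.mem_filter, mem_WS] at hw
      apply hSp
      rw [← hw.2]
      have := EmF_subset (u := z) (w := w)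
      rwa [hz, hw.1.1] at this
    rw [hzero u hu.1, hzero v hv.1]

/-! ### gluing fiberwise bijections into a global one -/

noncomputable def Fib (z : Word) (i : ℕ × ℕ × Finset ℕ) : Finset Word :=
  (WS i.1 i.2.1).filter (fun w => EmF z w = i.2.2)

noncomputable def ix (z w : Word) : ℕ × ℕ × Finset ℕ := (w.length, ht w, EmF z w)

lemma mem_Fib_ix (z w : Word) : w ∈ Fib z (ix z w) :=
  Finset.mem_filter.2 ⟨(mem_WS _ _ w).2 ⟨rfl, rfl⟩, rfl⟩

lemma sswilf_of_Nex {n : ℕ} {u v : Word} (hu : IsPerm n u) (hv : IsPerm n v) (hn : 1 ≤ n)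
    (hNex : ∀ L h (S : Finset ℕ), Nex u L h S = Nex v L h S) : SSWilf u v := by
  have hcard : ∀ i : ℕ × ℕ × Finset ℕ, (Fib u i).card = (Fib v i).card :=
    fun i => hNex i.1 i.2.1 i.2.2
  let eqv : ∀ i, {x // x ∈ Fib u i} ≃ {x // x ∈ Fib v i} :=
    fun i => Finset.equivOfCardEq (hcard i)
  let f : Word → Word := fun w => ((eqv (ix u w)) ⟨w, mem_Fib_ix u w⟩ : Word)
  let g : Word → Word := fun w => ((eqv (ix v w)).symm ⟨w, mem_Fib_ix v w⟩ : Word)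
  have hfmem : ∀ w, f w ∈ Fib v (ix u w) := fun w => ((eqv (ix u w)) ⟨w, mem_Fib_ix u w⟩).2
  have hgmem : ∀ w, g w ∈ Fib u (ix v w) := fun w => ((eqv (ix v w)).symm ⟨w, mem_Fib_ix v w⟩).2
  have hFibv : ∀ w i, w ∈ Fib v i → ix v w = i := by
    intro w i hw
    rw [Fib, Finset.mem_filter, mem_WS] at hw
    rw [ix, hw.1.1, hw.1.2, hw.2]
  have hFibu : ∀ w i, w ∈ Fib u i → ix u w = i := by
    intro w i hw
    rw [Fib, Finset.mem_filter, mem_WS] at hw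
    rw [ix, hw.1.1, hw.1.2, hw.2]
  have hgf : ∀ w, g (f w) = w := by
    intro w
    have hi : ix v (f w) = ix u w := hFibv (f w) (ix u w) (hfmem w)
    show ((eqv (ix v (f w))).symm ⟨f w, mem_Fib_ix v (f w)⟩ : Word) = w
    have key : ∀ (i : ℕ × ℕ × Finset ℕ) (hm : f w ∈ Fib v i), i = ix u w →
        ((eqv i).symm ⟨f w, hm⟩ : Word) = w := by
      rintro i hm rfl
      have : (⟨f w, hm⟩ : {x // x ∈ Fib v (ix u w)}) = (eqv (ix u w)) ⟨w, mem_Fib_ix u w⟩ :=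
        Subtype.ext rfl
      rw [this, Equiv.symm_apply_apply]
    exact key (ix v (f w)) (mem_Fib_ix v (f w)) hi
  have hfg : ∀ w, f (g w) = w := by
    intro w
    have hi : ix u (g w) = ix v w := hFibu (g w) (ix v w) (hgmem w)
    have key : ∀ (i : ℕ × ℕ × Finset ℕ) (hm : g w ∈ Fib u i), i = ix v w →
        ((eqv i) ⟨g w, hm⟩ : Word) = w := by
      rintro i hm rfl
      have : (⟨g w, hm⟩ : {x // x ∈ Fib u (ix v w)}) = (eqv (ix v w)).symm ⟨w, mem_Fib_ix v w⟩ :=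
        Subtype.ext rfl
      rw [this, Equiv.apply_symm_apply]
    exact key (ix u (g w)) (mem_Fib_ix u (g w)) hi
  refine ⟨f, Function.bijective_iff_has_inverse.2 ⟨g, hgf, hfg⟩, ?_, ?_⟩
  · intro w
    have := hfmem w
    rw [Fib, Finset.mem_filter, mem_WS] at this
    exact ⟨this.1.1, this.1.2⟩
  · intro w
    have := hfmem w
    rw [Fib, Finset.mem_filter, mem_WS] at this
    rw [← coe_EmF hu.1 hn, ← coe_EmF hv.1 hn, this.2]
    rfl



/-! ### assembly -/

lemma image_up_down (F : Finset ℕ) : (F.image (fun e => e + 1)).image (fun e => e - 1) = F := by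
  ext x
  simp only [Finset.mem_image]
  constructor
  · rintro ⟨y, ⟨z, hz, rfl⟩, rfl⟩
    simpa using hz
  · intro hx
    exact ⟨x + 1, ⟨x, hx, rfl⟩, rfl⟩

lemma htm_of_sswilf {n : ℕ} {u v : Word} (hu : IsPerm n u) (hv : IsPerm n v)
    (hss : SSWilf u v) :
    ∀ S : Finset ℕ, S.Nonempty → (∀ e ∈ S, 1 ≤ e) →
      ∀ L, (∀ e ∈ S, e + n ≤ L + 1) → htm u S L = htm v S L := by
  obtain ⟨f, hbij, hlh, hem⟩ := hss
  intro S hne hS1 L hfit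
  have le1 : htm v S L ≤ htm u S L := by
    set A := wfl u S L with hA
    have hSA : (↑S : Set ℕ) ⊆ Em u A := by
      apply (floor_iff hu (length_wfl : A.length = L) hS1 hfit).2
      intro p hp
      have hp' := Finset.mem_Icc.1 hp
      have : p - 1 < L := by omega
      rw [val_wfl this]
      have h1 : p - 1 + 1 = p := by omega
      rw [h1]
    have hSB : (↑S : Set ℕ) ⊆ Em v (f A) := by rw [← hem A]; exact hSA
    have hlenB : (f A).length = L := by rw [(hlh A).1, length_wfl]
    have hflB := (floor_iff hv hlenB hS1 hfit).1 hSB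
    calc htm v S L = ∑ p ∈ Finset.Icc 1 L, fl v S p := rfl
      _ ≤ ∑ p ∈ Finset.Icc 1 L, val (f A) (p - 1) := Finset.sum_le_sum hflB
      _ = ht (f A) := (ht_sum' hlenB).symm
      _ = ht A := (hlh A).2
      _ = htm u S L := ht_wfl
  have le2 : htm u S L ≤ htm v S L := by
    set B := wfl v S L with hB
    obtain ⟨C, hC⟩ := hbij.2 B
    have hSB : (↑S : Set ℕ) ⊆ Em v B := by
      apply (floor_iff hv (length_wfl : B.length = L) hS1 hfit).2
      intro p hp
      have hp' := Finset.mem_Icc.1 hp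
      have : p - 1 < L := by omega
      rw [val_wfl this]
      have h1 : p - 1 + 1 = p := by omega
      rw [h1]
    have hSC : (↑S : Set ℕ) ⊆ Em u C := by rw [hem C, hC]; exact hSB
    have hlenC : C.length = L := by
      have := (hlh C).1
      rw [hC] at this
      rw [← this, length_wfl]
    have hflC := (floor_iff hu hlenC hS1 hfit).1 hSC
    calc htm u S L ≤ ∑ p ∈ Finset.Icc 1 L, val C (p - 1) := Finset.sum_le_sum hflC
      _ = ht C := (ht_sum' hlenC).symm
      _ = ht (f C) := ((hlh C).2).symm
      _ = ht B := by rw [hC]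
      _ = htm v S L := ht_wfl
  omega

lemma AB_split {n i : ℕ} (hi : i ≤ n) (z : Word) (E : Finset ℕ) :
    (Finset.Icc i n).biUnion (fun j => shiftSet (pos z j) E)
      = shiftSet (pos z i) E ∪ (Finset.Icc (i + 1) n).biUnion (fun j => shiftSet (pos z j) E) := by
  have h : Finset.Icc i n = insert i (Finset.Icc (i + 1) n) := by
    ext x
    simp only [Finset.mem_Icc, Finset.mem_insert]
    omega
  rw [h, Finset.biUnion_insert]

lemma AB_card_rel {n i : ℕ} (hi : i ≤ n) (z : Word) (E : Finset ℕ) :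
    ((Finset.Icc i n).biUnion (fun j => shiftSet (pos z j) E)).card
      + (shiftSet (pos z i) E ∩ (Finset.Icc (i + 1) n).biUnion (fun j => shiftSet (pos z j) E)).card
    = E.card + ((Finset.Icc (i + 1) n).biUnion (fun j => shiftSet (pos z j) E)).card := by
  rw [AB_split hi, ← card_shiftSet (pos z i) E]
  exact Finset.card_union_add_card_inter _ _

def Core (n : ℕ) (u v : Word) : Prop := ∀ i, 2 ≤ i → i ≤ n →
  ∃ a b, (Pset v n i).image (· + a) = (Pset u n i).image (· + b)

lemma core_of_sums {n : ℕ} {u v : Word} (hu : IsPerm n u) (hv : IsPerm n v)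
    (hsum : ∀ F : Finset ℕ, F.Nonempty → F ⊆ Finset.range n →
      ∑ i ∈ Finset.Icc 2 n, (US (Pset u n i) F).card
        = ∑ i ∈ Finset.Icc 2 n, (US (Pset v n i) F).card) : Core n u v := by
  apply separation n (fun i => Pset u n i) (fun i => Pset v n i)
  · exact fun i h2 _ => card_Pset hu (by omega)
  · exact fun i h2 _ => card_Pset hv (by omega)
  · exact fun i h2 _ => Pset_subset hu (by omega)
  · intro G hne hGb
    exact cor_eq_of_US_eq (Finset.Icc 2 n) n _ _ hsum G hne hGb

lemma US_eq_of_core {n : ℕ} {u v : Word} (hcore : Core n u v) :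
    ∀ i, 2 ≤ i → i ≤ n → ∀ F : Finset ℕ,
      (US (Pset u n i) F).card = (US (Pset v n i) F).card := by
  intro i h2 hn F
  obtain ⟨a, b, hab⟩ := hcore i h2 hn
  exact (US_card_of_shift hab F).symm

lemma AB_card_eq_of_core {n : ℕ} {u v : Word} (hu : IsPerm n u) (hv : IsPerm n v)
    (hcore : Core n u v) :
    ∀ i, 1 ≤ i → i ≤ n → ∀ E : Finset ℕ, (∀ e ∈ E, 1 ≤ e) →
      ((Finset.Icc i n).biUnion (fun j => shiftSet (pos u j) E)).card
        = ((Finset.Icc i n).biUnion (fun j => shiftSet (pos v j) E)).card := by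
  intro i h1 hi E hE
  rw [AB_eq_US hE, AB_eq_US hE]
  rcases eq_or_lt_of_le h1 with h | h
  · rw [← h, Pset_one hu, Pset_one hv]
  · exact US_eq_of_core hcore i h hi _

lemma rule_of_core {n : ℕ} {u v : Word} (hu : IsPerm n u) (hv : IsPerm n v) (hn : 1 ≤ n)
    (hcore : Core n u v) :
    ∀ i, 1 ≤ i → i ≤ n - 1 → ∀ E : Finset ℕ, (∀ e ∈ E, 1 ≤ e) →
      (shiftSet (pos u i) E ∩ (Finset.Icc (i + 1) n).biUnion (fun j => shiftSet (pos u j) E)).card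
        = (shiftSet (pos v i) E ∩ (Finset.Icc (i + 1) n).biUnion (fun j => shiftSet (pos v j) E)).card := by
  intro i h1 hi E hE
  have hin : i ≤ n := by omega
  have hin' : i + 1 ≤ n := by omega
  have r1 := AB_card_rel hin u E
  have r2 := AB_card_rel hin v E
  have e1 := AB_card_eq_of_core hu hv hcore i h1 hin E hE
  have e2 := AB_card_eq_of_core hu hv hcore (i + 1) (by omega) hin' E hE
  omega

lemma sums_of_htm {n : ℕ} {u v : Word} (hu : IsPerm n u) (hv : IsPerm n v) (hn : 1 ≤ n)
    (HC : ∀ S : Finset ℕ, S.Nonempty → (∀ e ∈ S, 1 ≤ e) →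
      ∀ L, (∀ e ∈ S, e + n ≤ L + 1) → htm u S L = htm v S L) :
    ∀ F : Finset ℕ, F.Nonempty → F ⊆ Finset.range n →
      ∑ i ∈ Finset.Icc 2 n, (US (Pset u n i) F).card
        = ∑ i ∈ Finset.Icc 2 n, (US (Pset v n i) F).card := by
  intro F hne hFb
  set S := F.image (fun e => e + 1) with hS
  have hS1 : ∀ e ∈ S, 1 ≤ e := by
    intro e he
    obtain ⟨x, _, rfl⟩ := Finset.mem_image.1 he
    omega
  have hSne : S.Nonempty := hne.image _
  have hfit : ∀ e ∈ S, e + n ≤ 2 * n + 1 := by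
    intro e he
    obtain ⟨x, hx, rfl⟩ := Finset.mem_image.1 he
    have := Finset.mem_range.1 (hFb hx)
    omega
  have h := HC S hSne hS1 (2 * n) hfit
  rw [htm_eq hu hn hS1 hfit, htm_eq hv hn hS1 hfit] at h
  rw [hS, image_up_down] at h
  omega

lemma embSet_of_subset {n : ℕ} {E : Finset ℕ} (h1 : 1 ∈ E) (hE : E ⊆ Finset.Icc 1 n) :
    IsEmbSet n E := by
  refine ⟨h1, fun a ha => (Finset.mem_Icc.1 (hE ha)).1, ?_⟩
  intro a ha
  by_cases hmax : ∀ b ∈ E, b ≤ a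
  · exact Or.inl hmax
  · push_neg at hmax
    obtain ⟨b, hb, hab⟩ := hmax
    refine Or.inr ⟨b, hb, hab, ?_⟩
    have h2 := Finset.mem_Icc.1 (hE hb)
    have h3 := Finset.mem_Icc.1 (hE ha)
    omega

lemma AB_eq_of_rule {n : ℕ} {u v : Word} (hu : IsPerm n u) (hv : IsPerm n v) (hn : 1 ≤ n)
    (hrule : ∀ i, 1 ≤ i → i ≤ n - 1 → ∀ E : Finset ℕ, IsEmbSet n E →
      (shiftSet (pos u i) E ∩ (Finset.Icc (i + 1) n).biUnion (fun j => shiftSet (pos u j) E)).card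
        = (shiftSet (pos v i) E ∩ (Finset.Icc (i + 1) n).biUnion (fun j => shiftSet (pos v j) E)).card) :
    ∀ E : Finset ℕ, 1 ∈ E → E ⊆ Finset.Icc 1 n → ∀ i, 2 ≤ i → i ≤ n →
      ((Finset.Icc i n).biUnion (fun j => shiftSet (pos u j) E)).card
        = ((Finset.Icc i n).biUnion (fun j => shiftSet (pos v j) E)).card := by
  intro E h1E hEsub
  have hemb : IsEmbSet n E := embSet_of_subset h1E hEsub
  have main : ∀ d i, i = n - d → 2 ≤ i → i ≤ n →
      ((Finset.Icc i n).biUnion (fun j => shiftSet (pos u j) E)).card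
        = ((Finset.Icc i n).biUnion (fun j => shiftSet (pos v j) E)).card := by
    intro d
    induction d with
    | zero =>
      intro i hieq h2 hin
      have : i = n := by omega
      subst this
      rw [Finset.Icc_self, Finset.singleton_biUnion, Finset.singleton_biUnion,
        card_shiftSet, card_shiftSet]
    | succ d ihd =>
      intro i hieq h2 hin
      rcases eq_or_lt_of_le hin with heq | hlt
      · subst heq
        rw [Finset.Icc_self, Finset.singleton_biUnion, Finset.singleton_biUnion,
          card_shiftSet, card_shiftSet]
      · have r1 := AB_card_rel (le_of_lt hlt) u E
        have r2 := AB_card_rel (le_of_lt hlt) v E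
        have hr := hrule i (by omega) (by omega) E hemb
        have ih := ihd (i + 1) (by omega) (by omega) (by omega)
        omega
  intro i h2 hin
  exact main (n - i) i (by omega) h2 hin

lemma core_of_rule {n : ℕ} {u v : Word} (hu : IsPerm n u) (hv : IsPerm n v) (hn : 1 ≤ n)
    (hrule : ∀ i, 1 ≤ i → i ≤ n - 1 → ∀ E : Finset ℕ, IsEmbSet n E →
      (shiftSet (pos u i) E ∩ (Finset.Icc (i + 1) n).biUnion (fun j => shiftSet (pos u j) E)).card
        = (shiftSet (pos v i) E ∩ (Finset.Icc (i + 1) n).biUnion (fun j => shiftSet (pos v j) E)).card) :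
    Core n u v := by
  apply core_of_sums hu hv
  intro F hne hFb
  apply Finset.sum_congr rfl
  intro i hi
  rw [Finset.mem_Icc] at hi
  -- normalize F to contain 0
  set m := F.min' hne with hm
  have hmF : ∀ x ∈ F, m ≤ x := fun x hx => F.min'_le x hx
  set F' := F.image (fun x => x - m) with hF'
  have hF'0 : (0 : ℕ) ∈ F' := Finset.mem_image.2 ⟨m, F.min'_mem hne, by omega⟩
  have hF'b : F' ⊆ Finset.range n := by
    intro x hx
    obtain ⟨y, hy, rfl⟩ := Finset.mem_image.1 hx
    have := Finset.mem_range.1 (hFb hy)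
    rw [Finset.mem_range]
    omega
  set E := F'.image (fun e => e + 1) with hE
  have h1E : (1 : ℕ) ∈ E := Finset.mem_image.2 ⟨0, hF'0, rfl⟩
  have hEsub : E ⊆ Finset.Icc 1 n := by
    intro x hx
    obtain ⟨y, hy, rfl⟩ := Finset.mem_image.1 hx
    have := Finset.mem_range.1 (hF'b hy)
    rw [Finset.mem_Icc]
    omega
  have hE1 : ∀ e ∈ E, 1 ≤ e := fun e he => (Finset.mem_Icc.1 (hEsub he)).1
  have hEF' : E.image (fun e => e - 1) = F' := image_up_down F'
  have hAB := AB_eq_of_rule hu hv hn hrule E h1E hEsub i hi.1 hi.2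
  rw [AB_eq_US hE1, AB_eq_US hE1, hEF'] at hAB
  rw [US_F_shift (Pset u n i) F m hmF, US_F_shift (Pset v n i) F m hmF]
  exact hAB

lemma htm_of_core {n : ℕ} {u v : Word} (hu : IsPerm n u) (hv : IsPerm n v) (hn : 1 ≤ n)
    (hcore : Core n u v) :
    ∀ S : Finset ℕ, S.Nonempty → (∀ e ∈ S, 1 ≤ e) →
      ∀ L, (∀ e ∈ S, e + n ≤ L + 1) → htm u S L = htm v S L := by
  intro S _ hS1 L hfit
  rw [htm_eq hu hn hS1 hfit, htm_eq hv hn hS1 hfit]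
  congr 1
  apply Finset.sum_congr rfl
  intro i hi
  rw [Finset.mem_Icc] at hi
  exact US_eq_of_core hcore i hi.1 hi.2 _

end SSW

/-- intersection rule: `u ∼ₛₛ v` iff for each `i ∈ [n-1]` and
every embedding set `E`, `|s̄ᵢ ∩ ⋃_{j>i} s̄ⱼ| = |t̄ᵢ ∩ ⋃_{j>i} t̄ⱼ|`. -/
theorem sswilf_iff_intersection_rule (n : ℕ) (u v : Word)
    (hu : IsPerm n u) (hv : IsPerm n v) :
    SSWilf u v ↔
      ∀ i, 1 ≤ i → i ≤ n - 1 → ∀ E : Finset ℕ, IsEmbSet n E →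
        (shiftSet (pos u i) E ∩
            (Finset.Icc (i + 1) n).biUnion (fun j => shiftSet (pos u j) E)).card =
        (shiftSet (pos v i) E ∩
            (Finset.Icc (i + 1) n).biUnion (fun j => shiftSet (pos v j) E)).card := by
  rcases Nat.eq_zero_or_pos n with rfl | hn
  · constructor
    · intro _ i h1 h2 E _
      exact absurd (h1.trans h2) (by omega)
    · intro _
      have hu0 : u = [] := List.length_eq_zero_iff.1 hu.1
      have hv0 : v = [] := List.length_eq_zero_iff.1 hv.1
      subst hu0; subst hv0
      exact ⟨id, Function.bijective_id, fun w => ⟨rfl, rfl⟩, fun w => rfl⟩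
  · constructor
    · intro hss i h1 h2 E hE
      have HC := SSW.htm_of_sswilf hu hv hss
      have hsum := SSW.sums_of_htm hu hv hn HC
      have hcore := SSW.core_of_sums hu hv hsum
      exact SSW.rule_of_core hu hv hn hcore i h1 h2 E hE.2.1
    · intro hrule
      have hcore := SSW.core_of_rule hu hv hn hrule
      have HC := SSW.htm_of_core hu hv hn hcore
      exact SSW.sswilf_of_Nex hu hv hn (fun L h S => SSW.Nex_eq_of_htm hu hv hn HC L h S)
end

section
/- Let n ∈ ℕ and let x, y, z be words such that x(n−1)ynz is a permutation of [n] (where (n−1) and n denote single letters). Then x(n−1)ynz is super-strongly Wilf equivalent to xny(n−1)z; i.e., swapping the positions of the two largest letters n−1 and n in a permutation yields a super-strongly Wilf equivalent permutation. -/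
section AuxSS

attribute [local instance] Classical.propDecidable

lemma ht_eq_sum_s7 (w : Word) : ht w = ∑ i ∈ Finset.range w.length, (w.getD i 1 : ℕ) := by
  induction w with
  | nil => simp [ht]
  | cons c w ih =>
      have h1 : ht (c :: w) = (c : ℕ) + ht w := by simp [ht]
      rw [h1, List.length_cons, Finset.sum_range_succ', ih]
      simp only [List.getD_cons_succ, List.getD_cons_zero]
      omega

lemma single_le_ht {w : Word} {i : ℕ} (hi : i < w.length) : (w.getD i 1 : ℕ) ≤ ht w := by
  rw [ht_eq_sum_s7]
  exact Finset.single_le_sum (f := fun i => (w.getD i 1 : ℕ)) (fun _ _ => Nat.zero_le _)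
    (Finset.mem_range.mpr hi)

lemma fiber_finite (ℓ s : ℕ) : {w : Word | w.length = ℓ ∧ ht w = s}.Finite := by
  have hsub : {w : Word | w.length = ℓ ∧ ht w = s} ⊆
      Set.range (fun g : Fin ℓ → Fin (s+1) => List.ofFn (fun i => ((g i : ℕ)).toPNat')) := by
    rintro w ⟨hl, hs⟩
    refine ⟨fun i => ⟨(w.getD i 1 : ℕ), ?_⟩, ?_⟩
    · have := single_le_ht (w := w) (i := i) (by omega)
      omega
    · apply List.ext_getElem (by simp [hl])
      intro i h1 h2
      simp only [List.getElem_ofFn]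
      have : ((w.getD i 1 : ℕ)).toPNat' = w.getD i 1 := PNat.coe_toPNat' _
      rw [this, List.getD_eq_getElem w 1 h2]
  exact Set.Finite.subset (Set.finite_range _) hsub

noncomputable def FiberF (ℓ s : ℕ) : Finset Word := (fiber_finite ℓ s).toFinset

lemma mem_FiberF {ℓ s : ℕ} {w : Word} : w ∈ FiberF ℓ s ↔ w.length = ℓ ∧ ht w = s := by
  simp [FiberF]

noncomputable def EmF (u w : Word) : Finset ℕ :=
  (Finset.Icc 1 (w.length + 1 - u.length)).filter (fun j => j ∈ Em u w)

lemma coe_EmF (u w : Word) : (EmF u w : Set ℕ) = Em u w := by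
  ext j
  simp only [EmF, Finset.coe_filter, Set.mem_setOf_eq, Finset.mem_Icc]
  constructor
  · rintro ⟨_, h⟩; exact h
  · intro hj
    refine ⟨⟨hj.1, ?_⟩, hj⟩
    have h2 := hj.2.1
    omega

lemma mem_EmF {u w : Word} {j : ℕ} : j ∈ EmF u w ↔ j ∈ Em u w := by
  have := coe_EmF u w
  constructor
  · intro hj
    have : j ∈ (EmF u w : Set ℕ) := hj
    rwa [coe_EmF] at this
  · intro hj
    have : j ∈ (EmF u w : Set ℕ) := by rw [coe_EmF]; exact hj
    exact this

noncomputable def NF (u : Word) (ℓ s : ℕ) (E : Finset ℕ) : Finset Word :=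
  (FiberF ℓ s).filter (fun w => EmF u w = E)

noncomputable def MF (u : Word) (ℓ s : ℕ) (E : Finset ℕ) : Finset Word :=
  (FiberF ℓ s).filter (fun w => E ⊆ EmF u w)

lemma EmF_subset {u w : Word} : EmF u w ⊆ Finset.Icc 1 (w.length + 1 - u.length) :=
  Finset.filter_subset _ _

lemma sswilf_of_counts (u v : Word)
    (hcard : ∀ ℓ s E, (NF u ℓ s E).card = (NF v ℓ s E).card) : SSWilf u v := by
  classical
  let eqv : ∀ ℓ s E, (NF u ℓ s E) ≃ (NF v ℓ s E) := fun ℓ s E =>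
    Fintype.equivOfCardEq (by simp only [Fintype.card_coe]; exact hcard ℓ s E)
  have hmemu : ∀ w : Word, w ∈ NF u w.length (ht w) (EmF u w) := by
    intro w; simp [NF, mem_FiberF]
  have hmemv : ∀ w : Word, w ∈ NF v w.length (ht w) (EmF v w) := by
    intro w; simp [NF, mem_FiberF]
  let f : Word → Word := fun w => ((eqv w.length (ht w) (EmF u w)) ⟨w, hmemu w⟩ : Word)
  let g : Word → Word := fun w => ((eqv w.length (ht w) (EmF v w)).symm ⟨w, hmemv w⟩ : Word)
  have hfmem : ∀ w, f w ∈ NF v w.length (ht w) (EmF u w) := fun w =>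
    ((eqv w.length (ht w) (EmF u w)) ⟨w, hmemu w⟩).2
  have hgmem : ∀ w, g w ∈ NF u w.length (ht w) (EmF v w) := fun w =>
    ((eqv w.length (ht w) (EmF v w)).symm ⟨w, hmemv w⟩).2
  have hfprop : ∀ w, (f w).length = w.length ∧ ht (f w) = ht w ∧ EmF v (f w) = EmF u w := by
    intro w
    have := hfmem w
    rw [NF, Finset.mem_filter, mem_FiberF] at this
    exact ⟨this.1.1, this.1.2, this.2⟩
  have hgprop : ∀ w, (g w).length = w.length ∧ ht (g w) = ht w ∧ EmF u (g w) = EmF v w := by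
    intro w
    have := hgmem w
    rw [NF, Finset.mem_filter, mem_FiberF] at this
    exact ⟨this.1.1, this.1.2, this.2⟩
  have gspec : ∀ (ℓ s : ℕ) (E : Finset ℕ) (w' : Word) (hmem : w' ∈ NF v ℓ s E),
      g w' = ((eqv ℓ s E).symm ⟨w', hmem⟩ : Word) := by
    intro ℓ s E w' hmem
    have h := hmem
    rw [NF, Finset.mem_filter, mem_FiberF] at h
    obtain ⟨⟨h1, h2⟩, h3⟩ := h
    subst h1; subst h2; subst h3
    rfl
  have fspec : ∀ (ℓ s : ℕ) (E : Finset ℕ) (w' : Word) (hmem : w' ∈ NF u ℓ s E),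
      f w' = ((eqv ℓ s E) ⟨w', hmem⟩ : Word) := by
    intro ℓ s E w' hmem
    have h := hmem
    rw [NF, Finset.mem_filter, mem_FiberF] at h
    obtain ⟨⟨h1, h2⟩, h3⟩ := h
    subst h1; subst h2; subst h3
    rfl
  have hgf : ∀ w, g (f w) = w := by
    intro w
    obtain ⟨h1, h2, h3⟩ := hfprop w
    have := gspec w.length (ht w) (EmF u w) (f w) (hfmem w)
    rw [this]
    have : (⟨f w, hfmem w⟩ : (NF v w.length (ht w) (EmF u w))) =
        (eqv w.length (ht w) (EmF u w)) ⟨w, hmemu w⟩ := Subtype.ext rfl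
    rw [this, Equiv.symm_apply_apply]
  have hfg : ∀ w, f (g w) = w := by
    intro w
    obtain ⟨h1, h2, h3⟩ := hgprop w
    have := fspec w.length (ht w) (EmF v w) (g w) (hgmem w)
    rw [this]
    have : (⟨g w, hgmem w⟩ : (NF u w.length (ht w) (EmF v w))) =
        (eqv w.length (ht w) (EmF v w)).symm ⟨w, hmemv w⟩ := Subtype.ext rfl
    rw [this, Equiv.apply_symm_apply]
  refine ⟨f, ?_, ?_, ?_⟩
  · exact Function.bijective_iff_has_inverse.mpr ⟨g, hgf, hfg⟩
  · intro w; exact ⟨(hfprop w).1, (hfprop w).2.1⟩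
  · intro w
    rw [← coe_EmF u w, ← coe_EmF v (f w), (hfprop w).2.2]
lemma NF_card_eq (u v : Word) (hl : u.length = v.length)
    (hM : ∀ ℓ s E, (MF u ℓ s E).card = (MF v ℓ s E).card) :
    ∀ ℓ s E, (NF u ℓ s E).card = (NF v ℓ s E).card := by
  classical
  intro ℓ s
  set V : Finset ℕ := Finset.Icc 1 (ℓ + 1 - u.length) with hV
  have hEmF_sub : ∀ (t : Word), t.length = u.length → ∀ w ∈ FiberF ℓ s, EmF t w ⊆ V := by
    intro t htl w hw j hj
    have hwl : w.length = ℓ := (mem_FiberF.mp hw).1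
    have := EmF_subset hj
    rw [hwl, htl] at this
    exact this
  have decomp : ∀ (t : Word), t.length = u.length → ∀ E : Finset ℕ,
      (MF t ℓ s E).card = ∑ E' ∈ V.powerset.filter (fun E' => E ⊆ E'), (NF t ℓ s E').card := by
    intro t htl E
    have hbi : MF t ℓ s E =
        (V.powerset.filter (fun E' => E ⊆ E')).biUnion (fun E' => NF t ℓ s E') := by
      ext w
      simp only [MF, NF, Finset.mem_biUnion, Finset.mem_filter, Finset.mem_powerset]
      constructor
      · rintro ⟨hw, hsub⟩
        exact ⟨EmF t w, ⟨hEmF_sub t htl w hw, hsub⟩, hw, rfl⟩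
      · rintro ⟨E', ⟨_, hEE'⟩, hw, hE'⟩
        exact ⟨hw, by rw [hE']; exact hEE'⟩
    rw [hbi]
    apply Finset.card_biUnion
    intro E1 _ E2 _ hne
    simp only [Finset.disjoint_left, NF, Finset.mem_filter]
    rintro w ⟨_, h1⟩ ⟨_, h2⟩
    exact hne (h1 ▸ h2 ▸ rfl)
  have main : ∀ k : ℕ, ∀ E : Finset ℕ, E ⊆ V → (V \ E).card ≤ k →
      (NF u ℓ s E).card = (NF v ℓ s E).card := by
    intro k
    induction k using Nat.strong_induction_on with
    | _ k IH =>
      intro E hEV hcard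
      have hEP : E ∈ V.powerset.filter (fun E' => E ⊆ E') := by
        simp [Finset.mem_powerset, hEV]
      have hdu := decomp u rfl E
      have hdv := decomp v hl.symm E
      rw [← Finset.add_sum_erase _ _ hEP] at hdu hdv
      have hsum : ∑ E' ∈ (V.powerset.filter (fun E' => E ⊆ E')).erase E, (NF u ℓ s E').card
          = ∑ E' ∈ (V.powerset.filter (fun E' => E ⊆ E')).erase E, (NF v ℓ s E').card := by
        apply Finset.sum_congr rfl
        intro E' hE'
        rw [Finset.mem_erase, Finset.mem_filter, Finset.mem_powerset] at hE'
        obtain ⟨hne, hE'V, hEE'⟩ := hE'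
        have hss : E ⊂ E' := Finset.ssubset_iff_subset_ne.mpr ⟨hEE', (Ne.symm hne)⟩
        have hlt : (V \ E').card < (V \ E).card := by
          rw [Finset.card_sdiff_of_subset hEV, Finset.card_sdiff_of_subset hE'V]
          have h1 := Finset.card_lt_card hss
          have h2 := Finset.card_le_card hE'V
          omega
        exact IH (V \ E').card (by omega) E' hE'V le_rfl
      have hMe := hM ℓ s E
      omega
  intro E
  by_cases hEV : E ⊆ V
  · exact main (V \ E).card E hEV le_rfl
  · have h1 : NF u ℓ s E = ∅ := by
      apply Finset.eq_empty_of_forall_notMem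
      intro w hw
      rw [NF, Finset.mem_filter] at hw
      exact hEV (hw.2 ▸ hEmF_sub u rfl w hw.1)
    have h2 : NF v ℓ s E = ∅ := by
      apply Finset.eq_empty_of_forall_notMem
      intro w hw
      rw [NF, Finset.mem_filter] at hw
      exact hEV (hw.2 ▸ hEmF_sub v hl.symm w hw.1)
    rw [h1, h2]
def clu (t : Word) (E : Finset ℕ) (q : ℕ) : ℕ :=
  E.sup (fun j => if j ≤ q ∧ q < j + t.length then (t.getD (q - j) 1 : ℕ) else 1)

lemma clu_le {t : Word} {E : Finset ℕ} {q m : ℕ} (hm : 1 ≤ m)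
    (h : ∀ j ∈ E, j ≤ q → q < j + t.length → (t.getD (q - j) 1 : ℕ) ≤ m) :
    clu t E q ≤ m := by
  apply Finset.sup_le
  intro j hj
  split_ifs with hw
  · exact h j hj hw.1 hw.2
  · exact hm

lemma le_clu {t : Word} {E : Finset ℕ} {j q : ℕ} (hj : j ∈ E) (h1 : j ≤ q)
    (h2 : q < j + t.length) : (t.getD (q - j) 1 : ℕ) ≤ clu t E q := by
  have h := Finset.le_sup (f := fun j => if j ≤ q ∧ q < j + t.length then (t.getD (q - j) 1 : ℕ) else 1) hj
  exact le_trans (le_of_eq (if_pos ⟨h1, h2⟩).symm) h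

lemma subset_EmF_iff_clu {t : Word} {E : Finset ℕ} {w : Word}
    (hE : ∀ j ∈ E, 1 ≤ j ∧ j - 1 + t.length ≤ w.length) :
    E ⊆ EmF t w ↔ ∀ q, 1 ≤ q → q ≤ w.length → clu t E q ≤ (w.getD (q - 1) 1 : ℕ) := by
  constructor
  · intro hsub q h1 h2
    apply Finset.sup_le
    intro j hj
    have hjEm : j ∈ Em t w := mem_EmF.mp (hsub hj)
    obtain ⟨hj1, _, hdom⟩ := hjEm
    split_ifs with hw
    · have hk : q - j < t.length := by omega
      have := hdom (q - j) hk
      have heq : j - 1 + (q - j) = q - 1 := by omega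
      rw [heq] at this
      exact_mod_cast this
    · exact (w.getD (q - 1) 1).one_le
  · intro hclu j hj
    obtain ⟨hj1, hjlen⟩ := hE j hj
    rw [mem_EmF]
    refine ⟨hj1, hjlen, ?_⟩
    intro k hk
    have h1 : 1 ≤ j + k := by omega
    have h2 : j + k ≤ w.length := by omega
    have hle := hclu (j + k) h1 h2
    have := le_clu (t := t) hj (show j ≤ j + k by omega) (show j + k < j + t.length by omega)
    have heq : j + k - j = k := by omega
    rw [heq] at this
    have heq2 : j + k - 1 = j - 1 + k := by omega
    rw [heq2] at hle
    exact_mod_cast le_trans this hle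

end AuxSS

/-- swapping the letters `n-1` and `n` in a permutation of `[n]`
yields a super-strongly Wilf equivalent permutation. -/
theorem sswilf_swap_top_two (n : ℕ) (x y z : Word) (a b : ℕ+)
    (ha : (a : ℕ) = n - 1) (hb : (b : ℕ) = n)
    (h : IsPerm n (x ++ a :: (y ++ b :: z))) :
    SSWilf (x ++ a :: (y ++ b :: z)) (x ++ b :: (y ++ a :: z)) := by
  classical
  obtain ⟨hulen, hucount⟩ := h
  set u : Word := x ++ a :: (y ++ b :: z) with hu
  set v : Word := x ++ b :: (y ++ a :: z) with hv
  set ka := x.length with hka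
  set kb := x.length + y.length + 1 with hkb
  have hlen_eq : x.length + y.length + z.length + 2 = n := by
    have := hulen
    simp only [hu, List.length_append, List.length_cons] at this
    omega
  have hn2 : 2 ≤ n := by
    have := a.one_le
    omega
  have hvlen : v.length = n := by
    simp only [hv, List.length_append, List.length_cons]
    omega
  -- letter values
  have hu_ka : u.getD ka 1 = a := by
    rw [hu, List.getD_append_right _ _ _ _ (le_refl x.length)]
    simp
  have hu_kb : u.getD kb 1 = b := by
    rw [hu, List.getD_append_right _ _ _ _ (show x.length ≤ kb by omega)]
    have h1 : kb - x.length = y.length + 1 := by omega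
    rw [h1, List.getD_cons_succ, List.getD_append_right _ _ _ _ (le_refl y.length)]
    simp
  have hv_ka : v.getD ka 1 = b := by
    rw [hv, List.getD_append_right _ _ _ _ (le_refl x.length)]
    simp
  have hv_kb : v.getD kb 1 = a := by
    rw [hv, List.getD_append_right _ _ _ _ (show x.length ≤ kb by omega)]
    have h1 : kb - x.length = y.length + 1 := by omega
    rw [h1, List.getD_cons_succ, List.getD_append_right _ _ _ _ (le_refl y.length)]
    simp
  have huv : ∀ k, k ≠ ka → k ≠ kb → u.getD k 1 = v.getD k 1 := by
    intro k h1 h2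
    rcases lt_or_ge k ka with hlt | hge
    · rw [hu, hv, List.getD_append _ _ _ _ hlt, List.getD_append _ _ _ _ hlt]
    · have hgt : x.length < k := by omega
      rw [hu, hv, List.getD_append_right _ _ _ _ (by omega), List.getD_append_right _ _ _ _ (by omega)]
      have hk : k - x.length = (k - x.length - 1) + 1 := by omega
      rw [hk, List.getD_cons_succ, List.getD_cons_succ]
      set t := k - x.length - 1 with htdef
      rcases lt_trichotomy t y.length with h | h | h
      · rw [List.getD_append _ _ _ _ h, List.getD_append _ _ _ _ h]
      · exact absurd (by omega : k = kb) h2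
      · rw [List.getD_append_right _ _ _ _ (by omega), List.getD_append_right _ _ _ _ (by omega)]
        have h3 : t - y.length = (t - y.length - 1) + 1 := by omega
        rw [h3, List.getD_cons_succ, List.getD_cons_succ]
  -- nodup and bounds
  set L : List ℕ := u.map (fun c : ℕ+ => (c : ℕ)) with hL
  have hucount' : ∀ k : ℕ, 1 ≤ k → k ≤ n → L.count k = 1 := by
    intro k h1 h2
    have := hucount k h1 h2
    rw [hL]; simpa [← List.map_eq_flatMap, Function.comp_def] using this
  have hLlen : L.length = n := by rw [hL, List.length_map, hulen]
  have hmemL : ∀ c ∈ L, c ≤ n := by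
    have hsub : Finset.Icc 1 n ⊆ L.toFinset := by
      intro k hk
      rw [List.mem_toFinset]
      rw [Finset.mem_Icc] at hk
      have := hucount' k hk.1 hk.2
      exact List.count_pos_iff.mp (by omega)
    have hsumT : ∑ c ∈ L.toFinset, L.count c = n := by
      have h1 := Multiset.toFinset_sum_count_eq (L : Multiset ℕ)
      simpa [hLlen] using h1
    have hsumI : ∑ c ∈ Finset.Icc 1 n, L.count c = n := by
      have hone : ∀ c ∈ Finset.Icc 1 n, L.count c = 1 := by
        intro c hc
        rw [Finset.mem_Icc] at hc
        exact hucount' c hc.1 hc.2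
      rw [Finset.sum_congr rfl hone]
      simp
    have hsd : ∑ c ∈ L.toFinset \ Finset.Icc 1 n, L.count c = 0 := by
      have h2 : ∑ c ∈ L.toFinset \ Finset.Icc 1 n, L.count c + ∑ c ∈ Finset.Icc 1 n, L.count c
          = ∑ c ∈ L.toFinset, L.count c := Finset.sum_sdiff hsub
      omega
    intro c hc
    by_contra hcon
    have hcmem : c ∈ L.toFinset \ Finset.Icc 1 n := by
      rw [Finset.mem_sdiff, List.mem_toFinset, Finset.mem_Icc]
      exact ⟨hc, by omega⟩
    have := Finset.sum_eq_zero_iff.mp hsd c hcmem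
    have := List.count_pos_iff.mpr hc
    omega
  have hnodup : L.Nodup := by
    rw [List.nodup_iff_count_le_one]
    intro c
    by_cases hc : c ∈ L
    · have h1 : 1 ≤ c := by
        obtain ⟨p, _, rfl⟩ := List.mem_map.mp hc
        exact p.one_le
      have := hucount' c h1 (hmemL c hc)
      omega
    · rw [List.count_eq_zero.mpr hc]
      omega
  have hgetInj : ∀ i j, i < n → j < n → (u.getD i 1 : ℕ) = (u.getD j 1 : ℕ) → i = j := by
    intro i j hi hj hij
    have hiu : i < u.length := by omega
    have hju : j < u.length := by omega
    have hiL : i < L.length := by omega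
    have hjL : j < L.length := by omega
    have e1 : L[i]'hiL = (u.getD i 1 : ℕ) := by
      rw [List.getD_eq_getElem u 1 hiu]
      simp [hL]
    have e2 : L[j]'hjL = (u.getD j 1 : ℕ) := by
      rw [List.getD_eq_getElem u 1 hju]
      simp [hL]
    have hLL : L[i]'hiL = L[j]'hjL := by rw [e1, e2]; exact hij
    exact (List.Nodup.getElem_inj_iff hnodup).mp hLL
  have hkab : ka < kb ∧ kb < n := by omega
  have hu_le : ∀ k, k < n → (u.getD k 1 : ℕ) ≤ n := by
    intro k hk
    have hmem : u.getD k 1 ∈ u := by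
      rw [List.getD_eq_getElem u 1 (by omega)]
      exact List.getElem_mem _
    exact hmemL _ (List.mem_map_of_mem (f := fun c : ℕ+ => (c : ℕ)) hmem)
  have hu_ne_n : ∀ k, k < n → k ≠ kb → (u.getD k 1 : ℕ) ≠ n := by
    intro k hk hne hcon
    apply hne
    apply hgetInj k kb hk (by omega)
    rw [hcon, hu_kb, hb]
  have hu_ne_n1 : ∀ k, k < n → k ≠ ka → (u.getD k 1 : ℕ) ≠ n - 1 := by
    intro k hk hne hcon
    apply hne
    apply hgetInj k ka hk (by omega)
    rw [hcon, hu_ka, ha]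
  have hv_le : ∀ k, k < n → (v.getD k 1 : ℕ) ≤ n := by
    intro k hk
    by_cases h1 : k = ka
    · rw [h1, hv_ka, hb]
    by_cases h2 : k = kb
    · rw [h2, hv_kb, ha]; omega
    rw [← huv k h1 h2]
    exact hu_le k hk
  have hv_ne_n : ∀ k, k < n → k ≠ ka → (v.getD k 1 : ℕ) ≠ n := by
    intro k hk h1
    by_cases h2 : k = kb
    · rw [h2, hv_kb, ha]; omega
    rw [← huv k h1 h2]
    exact hu_ne_n k hk h2
  apply sswilf_of_counts u v
  apply NF_card_eq u v (by rw [hulen, hvlen])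
  intro ℓ s E
  by_cases hEV : E ⊆ Finset.Icc 1 (ℓ + 1 - n)
  case neg =>
    have hemp : ∀ (t : Word), t.length = n → MF t ℓ s E = ∅ := by
      intro t htl
      apply Finset.eq_empty_of_forall_notMem
      intro w hw
      rw [MF, Finset.mem_filter] at hw
      apply hEV
      intro j hj
      have hj2 := EmF_subset (hw.2 hj)
      rwa [(mem_FiberF.mp hw.1).1, htl] at hj2
    rw [hemp u hulen, hemp v hvlen]
  case pos =>
  have hEmem : ∀ j ∈ E, 1 ≤ j ∧ j ≤ ℓ + 1 - n := by
    intro j hj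
    have := hEV hj
    rwa [Finset.mem_Icc] at this
  set Sa : Finset ℕ := E.image (fun j => j + ka) with hSadef
  set Sb : Finset ℕ := E.image (fun j => j + kb) with hSbdef
  set A : Finset ℕ := Sa \ Sb with hAdef
  set B : Finset ℕ := Sb \ Sa with hBdef
  have hcardAB : A.card = B.card := by
    have h1 : Sa.card = E.card := Finset.card_image_of_injective _ (fun p q hpq => by omega)
    have h2 : Sb.card = E.card := Finset.card_image_of_injective _ (fun p q hpq => by omega)
    have h3 := Finset.card_sdiff_add_card_inter Sa Sb
    have h4 := Finset.card_sdiff_add_card_inter Sb Sa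
    rw [Finset.inter_comm] at h4
    rw [← hAdef] at h3
    rw [← hBdef] at h4
    omega
  have eAB : {q // q ∈ A} ≃ {q // q ∈ B} := Fintype.equivOfCardEq (by
    rw [Fintype.card_coe, Fintype.card_coe, hcardAB])
  set σ : ℕ → ℕ := fun q =>
    if hq : q ∈ A then ((eAB ⟨q, hq⟩ : ℕ)) else
    if hq : q ∈ B then ((eAB.symm ⟨q, hq⟩ : ℕ)) else q with hσdef
  have hABdisj : ∀ q, q ∈ A → q ∈ B → False := by
    intro q h1 h2
    rw [hAdef, Finset.mem_sdiff] at h1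
    rw [hBdef, Finset.mem_sdiff] at h2
    exact h1.2 h2.1
  have hσA : ∀ q (hq : q ∈ A), σ q = ((eAB ⟨q, hq⟩ : ℕ)) := by
    intro q hq
    simp only [hσdef]
    rw [dif_pos hq]
  have hσB : ∀ q (hq : q ∈ B), σ q = ((eAB.symm ⟨q, hq⟩ : ℕ)) := by
    intro q hq
    simp only [hσdef]
    rw [dif_neg (fun h => hABdisj q h hq), dif_pos hq]
  have hσother : ∀ q, q ∉ A → q ∉ B → σ q = q := by
    intro q h1 h2
    simp only [hσdef]
    rw [dif_neg h1, dif_neg h2]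
  have hσA_mem : ∀ q (hq : q ∈ A), σ q ∈ B := by
    intro q hq
    rw [hσA q hq]
    exact (eAB ⟨q, hq⟩).2
  have hσB_mem : ∀ q (hq : q ∈ B), σ q ∈ A := by
    intro q hq
    rw [hσB q hq]
    exact (eAB.symm ⟨q, hq⟩).2
  have hσσ : ∀ q, σ (σ q) = q := by
    intro q
    by_cases hq : q ∈ A
    · rw [hσA q hq]
      have hB : ((eAB ⟨q, hq⟩ : ℕ)) ∈ B := (eAB ⟨q, hq⟩).2
      rw [hσB _ hB]
      have he : (⟨((eAB ⟨q, hq⟩ : ℕ)), hB⟩ : {q // q ∈ B}) = eAB ⟨q, hq⟩ := Subtype.ext rfl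
      rw [he, Equiv.symm_apply_apply]
    · by_cases hq2 : q ∈ B
      · rw [hσB q hq2]
        have hA : ((eAB.symm ⟨q, hq2⟩ : ℕ)) ∈ A := (eAB.symm ⟨q, hq2⟩).2
        rw [hσA _ hA]
        have he : (⟨((eAB.symm ⟨q, hq2⟩ : ℕ)), hA⟩ : {q // q ∈ A}) = eAB.symm ⟨q, hq2⟩ :=
          Subtype.ext rfl
        rw [he, Equiv.apply_symm_apply]
      · rw [hσother q hq hq2, hσother q hq hq2]
  have hSa_Icc : ∀ q ∈ Sa, 1 ≤ q ∧ q ≤ ℓ := by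
    intro q hq
    rw [hSadef] at hq
    obtain ⟨j, hj, rfl⟩ := Finset.mem_image.mp hq
    have := hEmem j hj
    omega
  have hSb_Icc : ∀ q ∈ Sb, 1 ≤ q ∧ q ≤ ℓ := by
    intro q hq
    rw [hSbdef] at hq
    obtain ⟨j, hj, rfl⟩ := Finset.mem_image.mp hq
    have := hEmem j hj
    omega
  have hσ_Icc : ∀ q, 1 ≤ q → q ≤ ℓ → 1 ≤ σ q ∧ σ q ≤ ℓ := by
    intro q h1 h2
    by_cases hq : q ∈ A
    · have hm := hσA_mem q hq
      rw [hBdef, Finset.mem_sdiff] at hm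
      exact hSb_Icc _ hm.1
    · by_cases hq2 : q ∈ B
      · have hm := hσB_mem q hq2
        rw [hAdef, Finset.mem_sdiff] at hm
        exact hSa_Icc _ hm.1
      · rw [hσother q hq hq2]
        exact ⟨h1, h2⟩
  have hclu_u_le : ∀ q, clu u E q ≤ n := by
    intro q
    apply clu_le (by omega)
    intro j hj h1 h2
    rw [hulen] at h2
    exact hu_le _ (by omega)
  have hclu_v_le : ∀ q, clu v E q ≤ n := by
    intro q
    apply clu_le (by omega)
    intro j hj h1 h2
    rw [hvlen] at h2
    exact hv_le _ (by omega)
  have hgeSa_u : ∀ q ∈ Sa, n - 1 ≤ clu u E q := by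
    intro q hq
    rw [hSadef] at hq
    obtain ⟨j, hj, rfl⟩ := Finset.mem_image.mp hq
    have hle := le_clu (t := u) (q := j + ka) hj (by omega) (by rw [hulen]; omega)
    rw [show j + ka - j = ka by omega, hu_ka] at hle
    omega
  have hgeSb_u : ∀ q ∈ Sb, n ≤ clu u E q := by
    intro q hq
    rw [hSbdef] at hq
    obtain ⟨j, hj, rfl⟩ := Finset.mem_image.mp hq
    have hle := le_clu (t := u) (q := j + kb) hj (by omega) (by rw [hulen]; omega)
    rw [show j + kb - j = kb by omega, hu_kb] at hle
    omega
  have hgeSa_v : ∀ q ∈ Sa, n ≤ clu v E q := by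
    intro q hq
    rw [hSadef] at hq
    obtain ⟨j, hj, rfl⟩ := Finset.mem_image.mp hq
    have hle := le_clu (t := v) (q := j + ka) hj (by omega) (by rw [hvlen]; omega)
    rw [show j + ka - j = ka by omega, hv_ka] at hle
    omega
  have hgeSb_v : ∀ q ∈ Sb, n - 1 ≤ clu v E q := by
    intro q hq
    rw [hSbdef] at hq
    obtain ⟨j, hj, rfl⟩ := Finset.mem_image.mp hq
    have hle := le_clu (t := v) (q := j + kb) hj (by omega) (by rw [hvlen]; omega)
    rw [show j + kb - j = kb by omega, hv_kb] at hle
    omega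
  have hleSb_u : ∀ q, q ∉ Sb → clu u E q ≤ n - 1 := by
    intro q hq
    apply clu_le (by omega)
    intro j hj h1 h2
    rw [hulen] at h2
    have hk : q - j < n := by omega
    have hne : q - j ≠ kb := by
      intro hcon
      apply hq
      rw [hSbdef]
      exact Finset.mem_image.mpr ⟨j, hj, by omega⟩
    have hb1 := hu_ne_n (q - j) hk hne
    have hb2 := hu_le (q - j) hk
    omega
  have hleSa_v : ∀ q, q ∉ Sa → clu v E q ≤ n - 1 := by
    intro q hq
    apply clu_le (by omega)
    intro j hj h1 h2
    rw [hvlen] at h2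
    have hk : q - j < n := by omega
    have hne : q - j ≠ ka := by
      intro hcon
      apply hq
      rw [hSadef]
      exact Finset.mem_image.mpr ⟨j, hj, by omega⟩
    have hb1 := hv_ne_n (q - j) hk hne
    have hb2 := hv_le (q - j) hk
    omega
  have hbranch : ∀ q, q ∉ Sa → q ∉ Sb → clu u E q = clu v E q := by
    intro q hqa hqb
    unfold clu
    apply Finset.sup_congr rfl
    intro j hj
    rw [hulen, hvlen]
    by_cases hw : j ≤ q ∧ q < j + n
    · rw [if_pos hw, if_pos hw]
      have h1 : q - j ≠ ka := by
        intro hcon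
        apply hqa
        rw [hSadef]
        exact Finset.mem_image.mpr ⟨j, hj, by omega⟩
      have h2 : q - j ≠ kb := by
        intro hcon
        apply hqb
        rw [hSbdef]
        exact Finset.mem_image.mpr ⟨j, hj, by omega⟩
      rw [huv (q - j) h1 h2]
    · rw [if_neg hw, if_neg hw]
  have htrans : ∀ q, 1 ≤ q → q ≤ ℓ → clu v E q = clu u E (σ q) := by
    intro q h1 h2
    by_cases hqA : q ∈ A
    · have hqSa : q ∈ Sa := by
        rw [hAdef, Finset.mem_sdiff] at hqA
        exact hqA.1
      have hm := hσA_mem q hqA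
      rw [hBdef, Finset.mem_sdiff] at hm
      have c1 := hgeSa_v q hqSa
      have c2 := hclu_v_le q
      have c3 := hgeSb_u _ hm.1
      have c4 := hclu_u_le (σ q)
      omega
    by_cases hqB : q ∈ B
    · have hm0 := hqB
      rw [hBdef, Finset.mem_sdiff] at hm0
      have hm := hσB_mem q hqB
      rw [hAdef, Finset.mem_sdiff] at hm
      have c1 := hgeSb_v q hm0.1
      have c2 := hleSa_v q hm0.2
      have c3 := hgeSa_u _ hm.1
      have c4 := hleSb_u _ hm.2
      omega
    rw [hσother q hqA hqB]
    by_cases hqSa : q ∈ Sa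
    · have hqSb : q ∈ Sb := by
        by_contra hcon
        exact hqA (by rw [hAdef, Finset.mem_sdiff]; exact ⟨hqSa, hcon⟩)
      have c1 := hgeSa_v q hqSa
      have c2 := hclu_v_le q
      have c3 := hgeSb_u q hqSb
      have c4 := hclu_u_le q
      omega
    · have hqSb : q ∉ Sb := by
        intro hcon
        exact hqB (by rw [hBdef, Finset.mem_sdiff]; exact ⟨hcon, hqSa⟩)
      exact (hbranch q hqSa hqSb).symm
  set Φ : Word → Word := fun w => (List.range ℓ).map (fun i => w.getD (σ (i+1) - 1) 1) with hΦdef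
  have hΦlen : ∀ w, (Φ w).length = ℓ := by
    intro w
    rw [hΦdef]
    simp
  have hΦgetD : ∀ w q, 1 ≤ q → q ≤ ℓ → (Φ w).getD (q-1) 1 = w.getD (σ q - 1) 1 := by
    intro w q h1 h2
    have hlt : q - 1 < (Φ w).length := by
      rw [hΦlen]
      omega
    rw [List.getD_eq_getElem _ 1 hlt]
    simp only [hΦdef, List.getElem_map, List.getElem_range]
    rw [show q - 1 + 1 = q by omega]
  have hΦht : ∀ w, w.length = ℓ → ht (Φ w) = ht w := by
    intro w hw
    rw [ht_eq_sum_s7, ht_eq_sum_s7, hΦlen w, hw]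
    have hstep : ∀ i ∈ Finset.range ℓ, ((Φ w).getD i 1 : ℕ) = (w.getD (σ (i+1) - 1) 1 : ℕ) := by
      intro i hi
      rw [Finset.mem_range] at hi
      have hh := hΦgetD w (i+1) (by omega) (by omega)
      rw [show i + 1 - 1 = i by omega] at hh
      rw [hh]
    rw [Finset.sum_congr rfl hstep]
    refine Finset.sum_nbij' (i := fun i => σ (i+1) - 1) (j := fun i => σ (i+1) - 1)
      ?_ ?_ ?_ ?_ ?_
    · intro i hi
      rw [Finset.mem_range] at hi
      rw [Finset.mem_range]
      show σ (i+1) - 1 < ℓ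
      have := hσ_Icc (i+1) (by omega) (by omega)
      omega
    · intro i hi
      rw [Finset.mem_range] at hi
      rw [Finset.mem_range]
      show σ (i+1) - 1 < ℓ
      have := hσ_Icc (i+1) (by omega) (by omega)
      omega
    · intro i hi
      rw [Finset.mem_range] at hi
      have hs := hσ_Icc (i+1) (by omega) (by omega)
      show σ (σ (i+1) - 1 + 1) - 1 = i
      rw [show σ (i+1) - 1 + 1 = σ (i+1) by omega, hσσ]
      omega
    · intro i hi
      rw [Finset.mem_range] at hi
      have hs := hσ_Icc (i+1) (by omega) (by omega)
      show σ (σ (i+1) - 1 + 1) - 1 = i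
      rw [show σ (i+1) - 1 + 1 = σ (i+1) by omega, hσσ]
      omega
    · intro i hi
      rfl
  have hΦΦ : ∀ w : Word, w.length = ℓ → Φ (Φ w) = w := by
    intro w hw
    apply List.ext_getElem (by rw [hΦlen, hw])
    intro i h1 h2
    have hiℓ : i < ℓ := by rwa [hw] at h2
    have hs := hσ_Icc (i+1) (by omega) (by omega)
    have e1 : (Φ (Φ w))[i] = (Φ (Φ w)).getD i 1 := (List.getD_eq_getElem _ 1 h1).symm
    have e2 : w[i] = w.getD i 1 := (List.getD_eq_getElem _ 1 h2).symm
    rw [e1, e2]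
    have s1 := hΦgetD (Φ w) (i+1) (by omega) (by omega)
    rw [show i + 1 - 1 = i by omega] at s1
    rw [s1]
    have s2 := hΦgetD w (σ (i+1)) hs.1 hs.2
    rw [s2, hσσ]
    rw [show i + 1 - 1 = i by omega]
  have hMFiff : ∀ (t : Word), t.length = n → ∀ w : Word,
      (w ∈ MF t ℓ s E ↔ w.length = ℓ ∧ ht w = s ∧
        ∀ q, 1 ≤ q → q ≤ ℓ → clu t E q ≤ (w.getD (q-1) 1 : ℕ)) := by
    intro t htl w
    rw [MF, Finset.mem_filter, mem_FiberF]
    constructor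
    · rintro ⟨⟨hw1, hw2⟩, hw3⟩
      refine ⟨hw1, hw2, ?_⟩
      have hE' : ∀ j ∈ E, 1 ≤ j ∧ j - 1 + t.length ≤ w.length := by
        intro j hj
        have := hEmem j hj
        rw [htl, hw1]
        omega
      have hcl := (subset_EmF_iff_clu hE').mp hw3
      intro q hq1 hq2
      exact hcl q hq1 (by omega)
    · rintro ⟨hw1, hw2, hw3⟩
      refine ⟨⟨hw1, hw2⟩, ?_⟩
      have hE' : ∀ j ∈ E, 1 ≤ j ∧ j - 1 + t.length ≤ w.length := by
        intro j hj
        have := hEmem j hj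
        rw [htl, hw1]
        omega
      apply (subset_EmF_iff_clu hE').mpr
      intro q hq1 hq2
      exact hw3 q hq1 (by omega)
  apply Finset.card_nbij' (i := Φ) (j := Φ)
  · intro w hw
    rw [Finset.mem_coe, hMFiff u hulen w] at hw
    rw [Finset.mem_coe, hMFiff v hvlen (Φ w)]
    obtain ⟨hw1, hw2, hw3⟩ := hw
    refine ⟨hΦlen w, by rw [hΦht w hw1, hw2], ?_⟩
    intro q h1 h2
    rw [hΦgetD w q h1 h2, htrans q h1 h2]
    have hs := hσ_Icc q h1 h2
    exact hw3 (σ q) hs.1 hs.2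
  · intro w hw
    rw [Finset.mem_coe, hMFiff v hvlen w] at hw
    rw [Finset.mem_coe, hMFiff u hulen (Φ w)]
    obtain ⟨hw1, hw2, hw3⟩ := hw
    refine ⟨hΦlen w, by rw [hΦht w hw1, hw2], ?_⟩
    intro q h1 h2
    rw [hΦgetD w q h1 h2]
    have hs := hσ_Icc q h1 h2
    have h4 := htrans (σ q) hs.1 hs.2
    rw [hσσ q] at h4
    rw [← h4]
    exact hw3 (σ q) hs.1 hs.2
  · intro w hw
    exact hΦΦ w ((hMFiff u hulen w).mp hw).1
  · intro w hw
    exact hΦΦ w ((hMFiff v hvlen w).mp hw).1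
end

section
/- Cross equivalence is an equivalence relation on the set of permutations of [n], and every permutation u is cross equivalent to its reversal ũ. -/
lemma indexOf_reverse_of_count_one {k : ℕ} :
    ∀ l : List ℕ, l.count k = 1 →
      l.reverse.idxOf k = l.length - 1 - l.idxOf k := by
  intro l
  induction l with
  | nil => simp
  | cons a t ih =>
    intro h
    rw [List.count_cons] at h
    by_cases hak : a = k
    · subst hak
      have ht : t.count a = 0 := by simpa using h
      have hnm : a ∉ t.reverse := by simp [List.count_eq_zero.mp ht]
      simp [List.idxOf_cons_self, List.idxOf_append_of_notMem hnm]
    · have ht : t.count k = 1 := by simpa [hak] using h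
      have hmem : k ∈ t := List.count_pos_iff.mp (by omega)
      have := ih ht
      rw [List.reverse_cons, List.idxOf_append_of_mem (by simpa using hmem)]
      rw [this, List.idxOf_cons_ne _ (by simpa using hak)]
      simp only [List.length_cons]
      omega

lemma word_map_eq (w : Word) :
    (w.map (fun x => (x : ℕ))) = List.map (fun x : ℕ+ => (x.val : ℕ)) w := by
  induction w with
  | nil => rfl
  | cons a t ih =>
    rw [show ((a::t : Word).map (fun x => (x : ℕ)))
        = (a : ℕ) :: (t.map (fun x => (x : ℕ))) from rfl, ih]
    rfl

lemma pos_reverse {n : ℕ} {u : Word} (hu : IsPerm n u) {k : ℕ} (h1 : 1 ≤ k) (h2 : k ≤ n) :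
    pos u.reverse k = n + 1 - pos u k ∧ 1 ≤ pos u k ∧ pos u k ≤ n := by
  obtain ⟨hlen, hcnt⟩ := hu
  have hc := hcnt k h1 h2
  rw [word_map_eq] at hc
  have hll : (List.map (fun x : ℕ+ => (x.val : ℕ)) u).length = n := by
    rw [List.length_map, hlen]
  have hmem : k ∈ List.map (fun x : ℕ+ => (x.val : ℕ)) u :=
    List.count_pos_iff.mp (by omega)
  have hidx : (List.map (fun x : ℕ+ => (x.val : ℕ)) u).idxOf k < n :=
    hll ▸ List.idxOf_lt_length_iff.mpr hmem
  have := indexOf_reverse_of_count_one (List.map (fun x : ℕ+ => (x.val : ℕ)) u) hc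
  unfold pos
  rw [word_map_eq u, word_map_eq u.reverse, List.map_reverse, this, hll]
  omega

/-- cross equivalence is an equivalence relation on permutations
of `[n]`, and every permutation is cross equivalent to its reversal. -/
theorem crossEq_equivalence_and_reverse (n : ℕ) :
    Equivalence (fun u v : {w : Word // IsPerm n w} => CrossEq n u.1 v.1) ∧
      ∀ u : Word, IsPerm n u → CrossEq n u u.reverse := by
  constructor
  · exact ⟨fun u i _ _ => rfl, fun h i h1 h2 => (h i h1 h2).symm,
      fun h h' i h1 h2 => (h i h1 h2).trans (h' i h1 h2)⟩
  · intro u hu i h1 h2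
    unfold iplus
    apply Multiset.map_congr rfl
    intro j hj
    rw [Multiset.mem_Icc] at hj
    obtain ⟨hji, hjn⟩ := hj
    obtain ⟨e1, p1, p2⟩ := pos_reverse hu h1 (by omega)
    obtain ⟨e1', p1', p2'⟩ := pos_reverse hu (k := j) (by omega) hjn
    rw [e1, e1']
    simp only [Nat.dist]
    omega
end

section
/- Let m ≤ n and let i₁ < … < i_m and j₁ < … < j_m be indices in [n] with i₁ ≤ j₁, with consecutive differences d_l = i_{l+1} − i_l and f_l = j_{l+1} − j_l. Then the equality |ī₁ ∩ ī₂ ∩ … ∩ ī_m| = |j̄₁ ∩ j̄₂ ∩ … ∩ j̄_m| holds for every embedding set E (where p̄ = (p−1)+E) if and only if (d₁, …, d_{m−1}) = (f₁, …, f_{m−1}). -/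
lemma fin_strictMono_eq_id {m : ℕ} (g : Fin m → Fin m) (hg : StrictMono g) : g = id := by
  have hsurj : Function.Surjective g := Finite.injective_iff_surjective.mp hg.injective
  have h2 : Set.range g = Set.range (id : Fin m → Fin m) := by
    rw [Set.range_eq_univ.mpr hsurj, Set.range_id]
  have inst : WellFoundedLT (Fin m) := inferInstance
  exact (@StrictMono.range_inj (Fin m) (Fin m) _ _ inst g id hg strictMono_id).1 h2

lemma mem_interShift {m : ℕ} (hm1 : 1 ≤ m) (p : Fin m → ℕ) (E : Finset ℕ) (x : ℕ) :
    x ∈ Finset.inf' Finset.univ ⟨⟨0, hm1⟩, Finset.mem_univ _⟩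
        (fun l => shiftSet (p l) E) ↔ ∀ l, ∃ e ∈ E, p l - 1 + e = x := by
  exact (Finset.mem_inf' _).trans (by simp [shiftSet])

/-- for strictly increasing index sequences `i₁<…<i_m`,
`j₁<…<j_m` in `[n]` with `i₁ ≤ j₁`, the shifted intersections have equal
cardinality for every embedding set `E` iff the consecutive differences
coincide. -/
theorem inter_card_eq_iff_differences_eq (n m : ℕ) (hm1 : 1 ≤ m) (hmn : m ≤ n)
    (i j : Fin m → ℕ) (hi : StrictMono i) (hj : StrictMono j)
    (hiR : ∀ l, 1 ≤ i l ∧ i l ≤ n) (hjR : ∀ l, 1 ≤ j l ∧ j l ≤ n)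
    (h0 : i ⟨0, hm1⟩ ≤ j ⟨0, hm1⟩) :
    (∀ E : Finset ℕ, 1 ∈ E → (∀ e ∈ E, 1 ≤ e) →
        (Finset.inf' Finset.univ ⟨⟨0, hm1⟩, Finset.mem_univ _⟩
            (fun l => shiftSet (i l) E)).card =
        (Finset.inf' Finset.univ ⟨⟨0, hm1⟩, Finset.mem_univ _⟩
            (fun l => shiftSet (j l) E)).card)
    ↔ ∀ k : ℕ, ∀ h : k + 1 < m,
        i ⟨k + 1, h⟩ - i ⟨k, by omega⟩ = j ⟨k + 1, h⟩ - j ⟨k, by omega⟩ := by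
  constructor
  · intro hcard k hk
    set lm : Fin m := ⟨m - 1, by omega⟩ with hlm
    have hil : ∀ l : Fin m, i l ≤ i lm := by
      intro l
      apply hi.monotone
      rw [hlm, Fin.le_def]
      show (l : ℕ) ≤ m - 1
      have := l.isLt
      omega
    set E : Finset ℕ := Finset.image (fun l => i lm - i l + 1) Finset.univ with hE
    have h1E : 1 ∈ E := by
      rw [hE, Finset.mem_image]
      exact ⟨lm, Finset.mem_univ _, by omega⟩
    have hge : ∀ e ∈ E, 1 ≤ e := by
      intro e he
      rw [hE, Finset.mem_image] at he
      obtain ⟨l, -, hl⟩ := he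
      omega
    have hmemE : ∀ e, e ∈ E ↔ ∃ l' : Fin m, i lm - i l' + 1 = e := by
      intro e; rw [hE, Finset.mem_image]; simp
    have hSi : Finset.inf' Finset.univ ⟨⟨0, hm1⟩, Finset.mem_univ _⟩
        (fun l => shiftSet (i l) E) = {i lm} := by
      ext x
      rw [mem_interShift hm1, Finset.mem_singleton]
      constructor
      · intro hx
        obtain ⟨e, heE, hex⟩ := hx lm
        have he1 : 1 ≤ e := hge e heE
        obtain ⟨e', he'E, he'x⟩ := hx ⟨0, hm1⟩
        obtain ⟨l', hl'⟩ := (hmemE e').1 he'E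
        have h1 : 1 ≤ i ⟨0, hm1⟩ := (hiR _).1
        have h2 : i ⟨0, hm1⟩ ≤ i l' := hi.monotone (by simp [Fin.le_def])
        have h3 : i l' ≤ i lm := hil l'
        have h4 : 1 ≤ i lm := (hiR _).1
        omega
      · intro hx
        intro l
        refine ⟨i lm - i l + 1, (hmemE _).2 ⟨l, rfl⟩, ?_⟩
        have h1 : 1 ≤ i l := (hiR _).1
        have h2 : i l ≤ i lm := hil l
        omega
    have hcardj : (Finset.inf' Finset.univ ⟨⟨0, hm1⟩, Finset.mem_univ _⟩
        (fun l => shiftSet (j l) E)).card = 1 := by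
      rw [← hcard E h1E hge, hSi]; simp
    have hpos : 0 < (Finset.inf' Finset.univ ⟨⟨0, hm1⟩, Finset.mem_univ _⟩
        (fun l => shiftSet (j l) E)).card := by omega
    obtain ⟨x₀, hx₀⟩ := Finset.card_pos.mp hpos
    rw [mem_interShift hm1] at hx₀
    have key : ∀ l : Fin m, ∃ l' : Fin m, x₀ + i l' = j l + i lm := by
      intro l
      obtain ⟨e, heE, hex⟩ := hx₀ l
      obtain ⟨l', hl'⟩ := (hmemE e).1 heE
      have h1 : 1 ≤ j l := (hjR _).1
      have h2 : i l' ≤ i lm := hil l'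
      exact ⟨l', by omega⟩
    choose g hg using key
    have hgmono : StrictMono g := by
      intro a b hab
      have hja : j a < j b := hj hab
      have h1 := hg a
      have h2 := hg b
      have : i (g a) < i (g b) := by omega
      exact hi.lt_iff_lt.mp this
    have hgid : g = id := fin_strictMono_eq_id g hgmono
    have hkey : ∀ l : Fin m, x₀ + i l = j l + i lm := by
      intro l
      have := hg l
      rw [hgid] at this
      exact this
    have e1 := hkey ⟨k + 1, hk⟩
    have e2 := hkey ⟨k, by omega⟩
    omega
  · intro hd E h1E hge
    set c := j ⟨0, hm1⟩ - i ⟨0, hm1⟩ with hc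
    have hjc : ∀ l : Fin m, j l = i l + c := by
      have key : ∀ k, ∀ hk : k < m, j ⟨k, hk⟩ = i ⟨k, hk⟩ + c := by
        intro k
        induction k with
        | zero => intro hk; omega
        | succ k ih =>
          intro hk
          have hk' : k < m := by omega
          have hdk := hd k hk
          have h1 : i ⟨k, hk'⟩ < i ⟨k + 1, hk⟩ := hi (by simp [Fin.lt_def])
          have h2 : j ⟨k, hk'⟩ < j ⟨k + 1, hk⟩ := hj (by simp [Fin.lt_def])
          have h3 := ih hk'
          omega
      intro l
      have := key l.val l.isLt
      simpa using this
    have himg : Finset.inf' Finset.univ ⟨⟨0, hm1⟩, Finset.mem_univ _⟩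
        (fun l => shiftSet (j l) E) =
        (Finset.inf' Finset.univ ⟨⟨0, hm1⟩, Finset.mem_univ _⟩
          (fun l => shiftSet (i l) E)).image (fun y => y + c) := by
      ext x
      rw [mem_interShift hm1, Finset.mem_image]
      constructor
      · intro hx
        obtain ⟨e0, he0E, he0x⟩ := hx ⟨0, hm1⟩
        have h1 : 1 ≤ i ⟨0, hm1⟩ := (hiR _).1
        have h2 : 1 ≤ e0 := hge e0 he0E
        have h3 := hjc ⟨0, hm1⟩
        have hxc : c ≤ x := by omega
        refine ⟨x - c, ?_, by omega⟩
        rw [mem_interShift hm1]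
        intro l
        obtain ⟨e, heE, hex⟩ := hx l
        refine ⟨e, heE, ?_⟩
        have h4 : 1 ≤ i l := (hiR _).1
        have h5 := hjc l
        omega
      · rintro ⟨y, hy, rfl⟩
        rw [mem_interShift hm1] at hy
        intro l
        obtain ⟨e, heE, hey⟩ := hy l
        refine ⟨e, heE, ?_⟩
        have h4 : 1 ≤ i l := (hiR _).1
        have h5 := hjc l
        omega
    rw [himg, Finset.card_image_of_injective _ (add_left_injective c)]
end
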